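/- arXiv:2011.08938 — 9 statements merged into one kernel-verified Lean document; each statement's English description precedes it below -/
import Mathlib

section
/- For all integers m, n ≥ 1, the determinant of the adjacency matrix of the complete bridge graph B_{m,n} equals (−1)^{m+n−1}·(3−(m+n)). -/
/-- The complete bridge graph `B_{m,n}` on vertex set `Fin (m+n)` (0-indexed version of the
paper's `{1, …, m+n}`): vertices `0, …, m-1` form a complete graph `K_m`, vertices
`m, …, m+n-1` form a complete graph `K_n`, and the only further edge is the bridge joining
vertex `m-1` (the paper's vertex `m`) to vertex `m` (the paper's vertex `m+1`). -/
def bridgeGraph (m n : ℕ) : SimpleGraph (Fin (m + n)) :=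
  SimpleGraph.fromRel (fun i j =>
    ((i : ℕ) < m ∧ (j : ℕ) < m) ∨ (m ≤ (i : ℕ) ∧ m ≤ (j : ℕ)) ∨
      ((i : ℕ) + 1 = m ∧ (j : ℕ) = m))

instance (m n : ℕ) : DecidableRel (bridgeGraph m n).Adj := fun i j =>
  decidable_of_iff (i ≠ j ∧
      ((((i : ℕ) < m ∧ (j : ℕ) < m) ∨ (m ≤ (i : ℕ) ∧ m ≤ (j : ℕ)) ∨
        ((i : ℕ) + 1 = m ∧ (j : ℕ) = m)) ∨
       (((j : ℕ) < m ∧ (i : ℕ) < m) ∨ (m ≤ (j : ℕ) ∧ m ≤ (i : ℕ)) ∨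
        ((j : ℕ) + 1 = m ∧ (i : ℕ) = m)))) Iff.rfl

namespace BridgeAux

open Matrix Finset

/-- The left factor of the rank-4 part of the adjacency matrix. -/
def U (m n : ℕ) : Matrix (Fin (m + n)) (Fin 4) ℝ :=
  Matrix.of fun i k =>
    ![if (i : ℕ) < m then (1 : ℝ) else 0,
      if m ≤ (i : ℕ) then 1 else 0,
      if (i : ℕ) + 1 = m then 1 else 0,
      if (i : ℕ) = m then 1 else 0] k

/-- The right factor of the rank-4 part of the adjacency matrix. -/
def V (m n : ℕ) : Matrix (Fin (m + n)) (Fin 4) ℝ :=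
  Matrix.of fun i k =>
    ![if (i : ℕ) < m then (1 : ℝ) else 0,
      if m ≤ (i : ℕ) then 1 else 0,
      if (i : ℕ) = m then 1 else 0,
      if (i : ℕ) + 1 = m then 1 else 0] k

lemma sum_zero {m n : ℕ} (p : Fin (m + n) → Prop) [DecidablePred p] (h : ∀ a, ¬ p a) :
    ∑ i : Fin (m + n), (if p i then (1 : ℝ) else 0) = 0 := by
  simp [h]

lemma sum_one {m n : ℕ} (c : ℕ) (hc : c < m + n) (p : Fin (m + n) → Prop) [DecidablePred p]
    (h : ∀ a, p a ↔ (a : ℕ) = c) :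
    ∑ i : Fin (m + n), (if p i then (1 : ℝ) else 0) = 1 := by
  simp only [h]
  rw [Fin.sum_univ_eq_sum_range (fun a => if a = c then (1 : ℝ) else 0)]
  rw [Finset.sum_ite_eq' (Finset.range (m + n)) c (fun _ => (1 : ℝ))]
  simp [hc]

lemma sum_lt {m n : ℕ} (p : Fin (m + n) → Prop) [DecidablePred p]
    (h : ∀ a, p a ↔ (a : ℕ) < m) :
    ∑ i : Fin (m + n), (if p i then (1 : ℝ) else 0) = m := by
  simp only [h]
  rw [Fin.sum_univ_eq_sum_range (fun a => if a < m then (1 : ℝ) else 0)]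
  have h1 : ∀ a ∈ Finset.range (m + n),
      (if a < m then (1 : ℝ) else 0) = (if a ∈ Finset.range m then (1 : ℝ) else 0) := by
    intro a _; simp [Finset.mem_range]
  rw [Finset.sum_congr rfl h1, Finset.sum_ite_mem]
  have h2 : Finset.range (m + n) ∩ Finset.range m = Finset.range m := by
    ext a; simp [Finset.mem_range]
  rw [h2]
  simp

lemma sum_ge {m n : ℕ} (p : Fin (m + n) → Prop) [DecidablePred p]
    (h : ∀ a, p a ↔ m ≤ (a : ℕ)) :
    ∑ i : Fin (m + n), (if p i then (1 : ℝ) else 0) = n := by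
  have key : ∑ i : Fin (m + n), ((if (i : ℕ) < m then (1 : ℝ) else 0)
      + (if p i then (1 : ℝ) else 0)) = m + n := by
    have h1 : ∀ i : Fin (m + n), ((if (i : ℕ) < m then (1 : ℝ) else 0)
        + (if p i then (1 : ℝ) else 0)) = 1 := by
      intro i
      by_cases hi : (i : ℕ) < m
      · have : ¬ p i := by rw [h]; omega
        simp [hi, this]
      · have : p i := by rw [h]; omega
        simp [hi, this]
    rw [Finset.sum_congr rfl fun i _ => h1 i]
    simp
  rw [Finset.sum_add_distrib,
    sum_lt (fun a : Fin (m + n) => (a : ℕ) < m) (fun a => Iff.rfl)] at key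
  linarith

lemma adj_eq (m n : ℕ) :
    (bridgeGraph m n).adjMatrix ℝ = U m n * (V m n)ᵀ - 1 := by
  ext i j
  rw [SimpleGraph.adjMatrix_apply]
  simp only [SimpleGraph.adjMatrix_apply, bridgeGraph, SimpleGraph.fromRel_adj,
    Matrix.sub_apply, Matrix.mul_apply, Matrix.transpose_apply, Matrix.one_apply,
    Fin.sum_univ_four, U, V, Matrix.of_apply, Matrix.cons_val_zero, Matrix.cons_val_one,
    Matrix.head_cons, Matrix.cons_val_two, Matrix.tail_cons, Matrix.cons_val_three,
    ne_eq, Fin.ext_iff, ite_zero_mul_ite_zero, one_mul]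
  split_ifs <;> norm_num <;> omega

lemma VTU (m n : ℕ) (hm : 1 ≤ m) (hn : 1 ≤ n) :
    (V m n)ᵀ * U m n =
      !![(m : ℝ), 0, 1, 0; 0, (n : ℝ), 0, 1; 0, 1, 0, 1; 1, 0, 1, 0] := by
  have hm1 : m - 1 < m + n := by omega
  have hmm : m < m + n := by omega
  ext k l
  fin_cases k <;> fin_cases l <;>
    · simp only [Matrix.mul_apply, Matrix.transpose_apply, U, V, Matrix.of_apply]
      simp [ite_zero_mul_ite_zero]
      try simp only [← ite_and]
      all_goals first
      | (refine sum_lt _ ?_; intro a; omega)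
      | (refine sum_ge _ ?_; intro a; omega)
      | (refine sum_zero _ ?_; intro a; omega)
      | (refine sum_one (m - 1) ?_ _ ?_
         · omega
         · intro a; omega)
      | (refine sum_one m ?_ _ ?_
         · omega
         · intro a; omega)

end BridgeAux

/-- For all integers `m, n ≥ 1`, the determinant of the adjacency matrix of
the complete bridge graph `B_{m,n}` equals `(−1)^(m+n−1) · (3 − (m+n))`. -/
theorem det_adjMatrix_bridgeGraph (m n : ℕ) (hm : 1 ≤ m) (hn : 1 ≤ n) :
    ((bridgeGraph m n).adjMatrix ℝ).det = (-1) ^ (m + n - 1) * (3 - ((m : ℝ) + (n : ℝ))) := by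
  rw [BridgeAux.adj_eq m n, ← neg_sub, Matrix.det_neg, Matrix.det_one_sub_mul_comm,
    BridgeAux.VTU m n hm hn]
  have he : (1 : Matrix (Fin 4) (Fin 4) ℝ)
        - !![(m : ℝ), 0, 1, 0; 0, (n : ℝ), 0, 1; 0, 1, 0, 1; 1, 0, 1, 0]
      = !![1 - (m : ℝ), 0, -1, 0; 0, 1 - (n : ℝ), 0, -1; 0, -1, 1, -1; -1, 0, -1, 1] := by
    ext i j
    fin_cases i <;> fin_cases j <;> simp [Matrix.one_apply]
  have hd : (1 - !![(m : ℝ), 0, 1, 0; 0, (n : ℝ), 0, 1; 0, 1, 0, 1; 1, 0, 1, 0]).det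
      = (m : ℝ) + n - 3 := by
    rw [he]
    simp [Matrix.det_succ_row_zero, Fin.sum_univ_succ, Fin.succAbove]
    ring
  rw [hd, Fintype.card_fin]
  obtain ⟨k, hk⟩ : ∃ k, m + n = k + 1 := ⟨m + n - 1, by omega⟩
  rw [hk, Nat.add_sub_cancel, pow_succ]
  ring
end

section
/- For all integers m, n, m′, n′ ≥ 1, det A(B_{m,n}) = det A(B_{m′,n′}) if and only if m + n = m′ + n′. -/
open Matrix Finset

/-- Auxiliary `(m+n) × 4` matrix: the adjacency matrix of the bridge graph is a rank-≤4
perturbation `U * W - 1`. -/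
def bridgeUmat (m n : ℕ) : Matrix (Fin (m + n)) (Fin 4) ℝ :=
  Matrix.of fun i =>
    ![if (i : ℕ) < m then 1 else 0, if m ≤ (i : ℕ) then 1 else 0,
      if (i : ℕ) + 1 = m then 1 else 0, if (i : ℕ) = m then 1 else 0]

/-- Auxiliary `4 × (m+n)` matrix. -/
def bridgeWmat (m n : ℕ) : Matrix (Fin 4) (Fin (m + n)) ℝ :=
  Matrix.of fun k j =>
    ![if (j : ℕ) < m then (1:ℝ) else 0, if m ≤ (j : ℕ) then 1 else 0,
      if (j : ℕ) = m then 1 else 0, if (j : ℕ) + 1 = m then 1 else 0] k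

set_option maxHeartbeats 4000000 in
lemma bridge_adj_eq (m n : ℕ) :
    (bridgeGraph m n).adjMatrix ℝ = bridgeUmat m n * bridgeWmat m n - 1 := by
  ext i j
  have hij : (i = j) ↔ ((i:ℕ) = (j:ℕ)) := by rw [Fin.val_inj]
  rw [SimpleGraph.adjMatrix_apply]
  simp only [SimpleGraph.adjMatrix_apply, Matrix.sub_apply, Matrix.mul_apply,
    Fin.sum_univ_four, bridgeUmat, bridgeWmat, Matrix.of_apply, Matrix.cons_val_zero,
    Matrix.cons_val_one, Matrix.head_cons, Matrix.cons_val_two, Matrix.tail_cons,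
    Matrix.cons_val_three, Matrix.one_apply, bridgeGraph, SimpleGraph.fromRel_adj,
    ne_eq, hij]
  split_ifs <;> first | omega | norm_num

lemma bridge_count_sum (m n : ℕ) (p q : ℕ → Prop) [DecidablePred p] [DecidablePred q]
    (E : Finset ℕ) (hE : ∀ a, a ∈ E ↔ a < m + n ∧ (p a ∧ q a)) :
    ∑ i : Fin (m + n), (if p (i : ℕ) then (1:ℝ) else 0) * (if q (i : ℕ) then (1:ℝ) else 0)
      = E.card := by
  simp only [ite_zero_mul_ite_zero, one_mul]
  rw [Fin.sum_univ_eq_sum_range (fun i => if p i ∧ q i then (1:ℝ) else 0), Finset.sum_boole]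
  have : Finset.filter (fun x => p x ∧ q x) (Finset.range (m + n)) = E := by
    ext a
    simp only [Finset.mem_filter, Finset.mem_range, hE a]
  rw [this]

lemma bridge_WU (m n : ℕ) (hm : 1 ≤ m) (hn : 1 ≤ n) :
    bridgeWmat m n * bridgeUmat m n = !![(m:ℝ),0,1,0; 0,(n:ℝ),0,1; 0,1,0,1; 1,0,1,0] := by
  ext k l
  fin_cases k <;> fin_cases l <;>
    simp only [Matrix.mul_apply, bridgeWmat, bridgeUmat, Matrix.of_apply, Fin.mk_zero,
      Fin.mk_one, show (⟨2, by omega⟩ : Fin 4) = 2 from rfl,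
      show (⟨3, by omega⟩ : Fin 4) = 3 from rfl,
      Matrix.cons_val_zero, Matrix.cons_val_one, Matrix.head_cons, Matrix.cons_val_two,
      Matrix.tail_cons, Matrix.cons_val_three]
  · rw [bridge_count_sum m n (fun a => a < m) (fun a => a < m) (Finset.range m)
      (by intro a; simp; try omega)]; simp [Nat.card_Ico]
  · rw [bridge_count_sum m n (fun a => a < m) (fun a => m ≤ a) (∅ : Finset ℕ)
      (by intro a; simp; try omega)]; simp [Nat.card_Ico]
  · rw [bridge_count_sum m n (fun a => a < m) (fun a => a + 1 = m) ({m-1} : Finset ℕ)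
      (by intro a; simp; try omega)]; simp [Nat.card_Ico]
  · rw [bridge_count_sum m n (fun a => a < m) (fun a => a = m) (∅ : Finset ℕ)
      (by intro a; simp; try omega)]; simp [Nat.card_Ico]
  · rw [bridge_count_sum m n (fun a => m ≤ a) (fun a => a < m) (∅ : Finset ℕ)
      (by intro a; simp; try omega)]; simp [Nat.card_Ico]
  · rw [bridge_count_sum m n (fun a => m ≤ a) (fun a => m ≤ a) (Finset.Ico m (m+n))
      (by intro a; simp; try omega)]; simp [Nat.card_Ico]
  · rw [bridge_count_sum m n (fun a => m ≤ a) (fun a => a + 1 = m) (∅ : Finset ℕ)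
      (by intro a; simp; try omega)]; simp [Nat.card_Ico]
  · rw [bridge_count_sum m n (fun a => m ≤ a) (fun a => a = m) ({m} : Finset ℕ)
      (by intro a; simp; try omega)]; simp [Nat.card_Ico]
  · rw [bridge_count_sum m n (fun a => a = m) (fun a => a < m) (∅ : Finset ℕ)
      (by intro a; simp; try omega)]; simp [Nat.card_Ico]
  · rw [bridge_count_sum m n (fun a => a = m) (fun a => m ≤ a) ({m} : Finset ℕ)
      (by intro a; simp; try omega)]; simp [Nat.card_Ico]
  · rw [bridge_count_sum m n (fun a => a = m) (fun a => a + 1 = m) (∅ : Finset ℕ)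
      (by intro a; simp; try omega)]; simp [Nat.card_Ico]
  · rw [bridge_count_sum m n (fun a => a = m) (fun a => a = m) ({m} : Finset ℕ)
      (by intro a; simp; try omega)]; simp [Nat.card_Ico]
  · rw [bridge_count_sum m n (fun a => a + 1 = m) (fun a => a < m) ({m-1} : Finset ℕ)
      (by intro a; simp; try omega)]; simp [Nat.card_Ico]
  · rw [bridge_count_sum m n (fun a => a + 1 = m) (fun a => m ≤ a) (∅ : Finset ℕ)
      (by intro a; simp; try omega)]; simp [Nat.card_Ico]
  · rw [bridge_count_sum m n (fun a => a + 1 = m) (fun a => a + 1 = m) ({m-1} : Finset ℕ)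
      (by intro a; simp; try omega)]; simp [Nat.card_Ico]
  · rw [bridge_count_sum m n (fun a => a + 1 = m) (fun a => a = m) (∅ : Finset ℕ)
      (by intro a; simp; try omega)]; simp [Nat.card_Ico]

lemma det_bridge (m n : ℕ) (hm : 1 ≤ m) (hn : 1 ≤ n) :
    ((bridgeGraph m n).adjMatrix ℝ).det = (-1)^(m+n) * ((m:ℝ) + n - 3) := by
  rw [bridge_adj_eq]
  have h1 : bridgeUmat m n * bridgeWmat m n - 1
      = (-1 : ℝ) • (1 - bridgeUmat m n * bridgeWmat m n) := by
    rw [neg_one_smul, neg_sub]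
  rw [h1, Matrix.det_smul, Matrix.det_one_sub_mul_comm, bridge_WU m n hm hn, Fintype.card_fin]
  congr 1
  simp [Matrix.det_succ_row_zero, Fin.sum_univ_succ, Matrix.one_apply,
    show (Fin.succAbove 2 2 : Fin 4) = 3 from rfl]
  ring

/-- For all integers `m, n, m′, n′ ≥ 1`,
`det A(B_{m,n}) = det A(B_{m′,n′})` if and only if `m + n = m′ + n′`. -/
theorem det_adjMatrix_bridgeGraph_eq_iff (m n m' n' : ℕ)
    (hm : 1 ≤ m) (hn : 1 ≤ n) (hm' : 1 ≤ m') (hn' : 1 ≤ n') :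
    ((bridgeGraph m n).adjMatrix ℝ).det = ((bridgeGraph m' n').adjMatrix ℝ).det ↔
      m + n = m' + n' := by
  rw [det_bridge m n hm hn, det_bridge m' n' hm' hn']
  constructor
  · intro h
    have h2 : ((-1:ℤ)^(m+n) * ((m:ℤ)+n-3)) = ((-1:ℤ)^(m'+n') * ((m':ℤ)+n'-3)) := by
      exact_mod_cast h
    rcases Nat.even_or_odd (m+n) with ⟨k,hk⟩|⟨k,hk⟩ <;>
        rcases Nat.even_or_odd (m'+n') with ⟨k',hk'⟩|⟨k',hk'⟩
    · simp only [Even.neg_one_pow ⟨k, hk⟩, Even.neg_one_pow ⟨k', hk'⟩, one_mul] at h2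
      omega
    · simp only [Even.neg_one_pow ⟨k, hk⟩, Odd.neg_one_pow ⟨k', hk'⟩, one_mul,
        neg_one_mul] at h2
      omega
    · simp only [Odd.neg_one_pow ⟨k, hk⟩, Even.neg_one_pow ⟨k', hk'⟩, one_mul,
        neg_one_mul] at h2
      omega
    · simp only [Odd.neg_one_pow ⟨k, hk⟩, Odd.neg_one_pow ⟨k', hk'⟩, neg_one_mul] at h2
      omega
  · intro h
    have hc : ((m:ℝ) + n) = ((m':ℝ) + n') := by exact_mod_cast congrArg (Nat.cast (R := ℝ)) h
    rw [h, hc]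
end

section
/- For all integers m ≥ n ≥ 1 with m + n ≠ 4, the determinant of the adjacency matrix of the complement of B_{m,n} is 0; moreover, the determinant of the adjacency matrix of the complement of B_{2,2} is 1. -/
/-- For all integers `m ≥ n ≥ 1` with `m + n ≠ 4`, the determinant of the
adjacency matrix of the complement of `B_{m,n}` is `0`; moreover, the determinant of the
adjacency matrix of the complement of `B_{2,2}` is `1`. -/
theorem det_adjMatrix_compl_bridgeGraph :
    (∀ m n : ℕ, 1 ≤ n → n ≤ m → m + n ≠ 4 →
      (((bridgeGraph m n)ᶜ).adjMatrix ℝ).det = 0) ∧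
    (((bridgeGraph 2 2)ᶜ).adjMatrix ℝ).det = 1 := by
  constructor
  · intro m n hn hnm hne
    by_cases hm : 3 ≤ m
    · -- rows 0 and 1 of the adjacency matrix coincide
      have h01 : (⟨0, by omega⟩ : Fin (m + n)) ≠ ⟨1, by omega⟩ := by
        simp [Fin.ext_iff]
      apply Matrix.det_zero_of_row_eq h01
      funext k
      simp only [SimpleGraph.adjMatrix_apply]
      congr 1
      simp only [SimpleGraph.compl_adj, bridgeGraph, SimpleGraph.fromRel_adj, ne_eq,
        Fin.ext_iff]
      rw [eq_iff_iff]
      omega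
    · -- small cases: (m, n) = (1, 1) or (2, 1)
      push_neg at hm
      interval_cases m <;> interval_cases n <;> first
      | omega
      | (have h : ((bridgeGraph 1 1)ᶜ).adjMatrix ℝ = !![0, 0; 0, 0] := by
          ext i j
          fin_cases i <;> fin_cases j <;>
            simp (config := { decide := true })
              [SimpleGraph.adjMatrix_apply, Matrix.vecHead, Matrix.vecTail]
         rw [h, Matrix.det_fin_two]; norm_num)
      | (have h : ((bridgeGraph 2 1)ᶜ).adjMatrix ℝ = !![0, 0, 1; 0, 0, 0; 1, 0, 0] := by
          ext i j
          fin_cases i <;> fin_cases j <;>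
            simp (config := { decide := true })
              [SimpleGraph.adjMatrix_apply, Matrix.vecHead, Matrix.vecTail]
         rw [h, Matrix.det_fin_three]; norm_num)
  · have h : ((bridgeGraph 2 2)ᶜ).adjMatrix ℝ
        = !![0, 0, 1, 1; 0, 0, 0, 1; 1, 0, 0, 0; 1, 1, 0, 0] := by
      ext i j
      fin_cases i <;> fin_cases j <;>
        simp (config := { decide := true })
          [SimpleGraph.adjMatrix_apply, Matrix.vecHead, Matrix.vecTail]
    rw [h]
    simp [Matrix.det_succ_row_zero, Fin.sum_univ_succ]
    rw [show Fin.succAbove (2 : Fin 4) 2 = 3 from rfl, show Fin.succAbove (3 : Fin 4) 2 = 2 from rfl]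
    rw [show (![0, 0, 0, 1] : Fin 4 → ℝ) 3 = 1 from rfl, show (![0, 0, 0, 1] : Fin 4 → ℝ) 2 = 0 from rfl]
    norm_num
end

section
/- For all integers m ≥ n ≥ 2, the determinant of the adjacency matrix of the suspension graph S(m,n) equals (−1)^{m+n}·(4mn − 5(m+n) + 6). -/
/-- The suspension graph `S(m,n)`: the complete bridge graph `B_{m,n}` (on the vertices with
value `< m + n`) together with one new vertex (the vertex with value `m + n`) joined to every
vertex of `B_{m,n}` except the two bridge vertices (the paper's vertices `m` and `m+1`, i.e.
the Lean vertices with values `m-1` and `m`). -/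
def suspGraph (m n : ℕ) : SimpleGraph (Fin (m + n + 1)) :=
  SimpleGraph.fromRel (fun i j =>
    ((i : ℕ) < m + n ∧ (j : ℕ) < m + n ∧
      (((i : ℕ) < m ∧ (j : ℕ) < m) ∨ (m ≤ (i : ℕ) ∧ m ≤ (j : ℕ)) ∨
        ((i : ℕ) + 1 = m ∧ (j : ℕ) = m))) ∨
    ((i : ℕ) = m + n ∧ (j : ℕ) < m + n ∧ (j : ℕ) + 1 ≠ m ∧ (j : ℕ) ≠ m))

instance (m n : ℕ) : DecidableRel (suspGraph m n).Adj := fun i j =>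
  decidable_of_iff (i ≠ j ∧
    ((((i : ℕ) < m + n ∧ (j : ℕ) < m + n ∧
      (((i : ℕ) < m ∧ (j : ℕ) < m) ∨ (m ≤ (i : ℕ) ∧ m ≤ (j : ℕ)) ∨
        ((i : ℕ) + 1 = m ∧ (j : ℕ) = m))) ∨
     ((i : ℕ) = m + n ∧ (j : ℕ) < m + n ∧ (j : ℕ) + 1 ≠ m ∧ (j : ℕ) ≠ m)) ∨
     (((j : ℕ) < m + n ∧ (i : ℕ) < m + n ∧
      (((j : ℕ) < m ∧ (i : ℕ) < m) ∨ (m ≤ (j : ℕ) ∧ m ≤ (i : ℕ)) ∨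
        ((j : ℕ) + 1 = m ∧ (i : ℕ) = m))) ∨
     ((j : ℕ) = m + n ∧ (i : ℕ) < m + n ∧ (i : ℕ) + 1 ≠ m ∧ (i : ℕ) ≠ m)))) Iff.rfl


open Matrix Finset

lemma sum_count (N a b : ℕ) (f : Fin N → ℝ) (hb : b ≤ N)
    (h : ∀ i : Fin N, f i = if a ≤ (i : ℕ) ∧ (i : ℕ) < b then 1 else 0) :
    ∑ i, f i = ((b - a : ℕ) : ℝ) := by
  rw [Finset.sum_congr rfl (fun i _ => h i),
    Fin.sum_univ_eq_sum_range (fun j => if a ≤ j ∧ j < b then (1:ℝ) else 0) N,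
    Finset.sum_boole]
  congr 1
  have : (Finset.range N).filter (fun i => a ≤ i ∧ i < b) = Finset.Ico a b := by
    ext i
    simp only [Finset.mem_filter, Finset.mem_range, Finset.mem_Ico]
    omega
  rw [this, Nat.card_Ico]

def Umat (m n : ℕ) : Matrix (Fin (m + n + 1)) (Fin 5) ℝ :=
  fun i => ![if (i : ℕ) < m then 1 else 0,
      if m ≤ (i : ℕ) ∧ (i : ℕ) < m + n then 1 else 0,
      if (i : ℕ) + 1 = m then 1 else 0,
      if (i : ℕ) = m then 1 else 0,
      if (i : ℕ) = m + n then 1 else 0]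

def Mcoef : Matrix (Fin 5) (Fin 5) ℝ :=
  !![1,0,0,0,1; 0,1,0,0,1; 0,0,0,1,-1; 0,0,1,0,-1; 1,1,-1,-1,1]

def Gram (m n : ℕ) : Matrix (Fin 5) (Fin 5) ℝ :=
  !![(m:ℝ),0,1,0,0; 0,(n:ℝ),0,1,0; 1,0,1,0,0; 0,1,0,1,0; 0,0,0,0,1]

set_option maxHeartbeats 2000000 in
set_option linter.unreachableTactic false in
lemma gram_eq (m n : ℕ) (hn : 2 ≤ n) (hnm : n ≤ m) :
    (Umat m n)ᵀ * Umat m n = Gram m n := by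
  ext k l
  fin_cases k <;> fin_cases l <;>
    simp only [Matrix.mul_apply, Matrix.transpose_apply, Umat, Gram] <;> simp
  · rw [sum_count _ 0 m _ (by omega)
        (fun i => by split_ifs <;> (try norm_num) <;> (exfalso; omega))] <;>
      (try rw [Nat.sub_sub_self (by omega : 1 ≤ m)]) <;>
      (try norm_num [Matrix.vecHead, Matrix.vecTail]) <;> (try norm_cast) <;> (try omega)
  · rw [sum_count _ 0 0 _ (by omega)
        (fun i => by split_ifs <;> (try norm_num) <;> (exfalso; omega))] <;>
      (try rw [Nat.sub_sub_self (by omega : 1 ≤ m)]) <;>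
      (try norm_num [Matrix.vecHead, Matrix.vecTail]) <;> (try norm_cast) <;> (try omega)
  · rw [sum_count _ (m-1) m _ (by omega)
        (fun i => by split_ifs <;> (try norm_num) <;> (exfalso; omega))] <;>
      (try rw [Nat.sub_sub_self (by omega : 1 ≤ m)]) <;>
      (try norm_num [Matrix.vecHead, Matrix.vecTail]) <;> (try norm_cast) <;> (try omega)
  · rw [sum_count _ 0 0 _ (by omega)
        (fun i => by split_ifs <;> (try norm_num) <;> (exfalso; omega))] <;>
      (try rw [Nat.sub_sub_self (by omega : 1 ≤ m)]) <;>
      (try norm_num [Matrix.vecHead, Matrix.vecTail]) <;> (try norm_cast) <;> (try omega)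
  · rw [sum_count _ 0 0 _ (by omega)
        (fun i => by split_ifs <;> (try norm_num) <;> (exfalso; omega))] <;>
      (try rw [Nat.sub_sub_self (by omega : 1 ≤ m)]) <;>
      (try norm_num [Matrix.vecHead, Matrix.vecTail]) <;> (try norm_cast) <;> (try omega)
  · rw [sum_count _ 0 0 _ (by omega)
        (fun i => by split_ifs <;> (try norm_num) <;> (exfalso; omega))] <;>
      (try rw [Nat.sub_sub_self (by omega : 1 ≤ m)]) <;>
      (try norm_num [Matrix.vecHead, Matrix.vecTail]) <;> (try norm_cast) <;> (try omega)
  · rw [sum_count _ m (m+n) _ (by omega)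
        (fun i => by split_ifs <;> (try norm_num) <;> (exfalso; omega))] <;>
      (try rw [Nat.sub_sub_self (by omega : 1 ≤ m)]) <;>
      (try norm_num [Matrix.vecHead, Matrix.vecTail]) <;> (try norm_cast) <;> (try omega)
  · rw [sum_count _ 0 0 _ (by omega)
        (fun i => by split_ifs <;> (try norm_num) <;> (exfalso; omega))] <;>
      (try rw [Nat.sub_sub_self (by omega : 1 ≤ m)]) <;>
      (try norm_num [Matrix.vecHead, Matrix.vecTail]) <;> (try norm_cast) <;> (try omega)
  · rw [sum_count _ m (m+1) _ (by omega)
        (fun i => by split_ifs <;> (try norm_num) <;> (exfalso; omega))] <;>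
      (try rw [Nat.sub_sub_self (by omega : 1 ≤ m)]) <;>
      (try norm_num [Matrix.vecHead, Matrix.vecTail]) <;> (try norm_cast) <;> (try omega)
  · rw [sum_count _ 0 0 _ (by omega)
        (fun i => by split_ifs <;> (try norm_num) <;> (exfalso; omega))] <;>
      (try rw [Nat.sub_sub_self (by omega : 1 ≤ m)]) <;>
      (try norm_num [Matrix.vecHead, Matrix.vecTail]) <;> (try norm_cast) <;> (try omega)
  · rw [sum_count _ (m-1) m _ (by omega)
        (fun i => by split_ifs <;> (try norm_num) <;> (exfalso; omega))] <;>
      (try rw [Nat.sub_sub_self (by omega : 1 ≤ m)]) <;>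
      (try norm_num [Matrix.vecHead, Matrix.vecTail]) <;> (try norm_cast) <;> (try omega)
  · rw [sum_count _ 0 0 _ (by omega)
        (fun i => by split_ifs <;> (try norm_num) <;> (exfalso; omega))] <;>
      (try rw [Nat.sub_sub_self (by omega : 1 ≤ m)]) <;>
      (try norm_num [Matrix.vecHead, Matrix.vecTail]) <;> (try norm_cast) <;> (try omega)
  · rw [sum_count _ (m-1) m _ (by omega)
        (fun i => by split_ifs <;> (try norm_num) <;> (exfalso; omega))] <;>
      (try rw [Nat.sub_sub_self (by omega : 1 ≤ m)]) <;>
      (try norm_num [Matrix.vecHead, Matrix.vecTail]) <;> (try norm_cast) <;> (try omega)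
  · rw [sum_count _ 0 0 _ (by omega)
        (fun i => by split_ifs <;> (try norm_num) <;> (exfalso; omega))] <;>
      (try rw [Nat.sub_sub_self (by omega : 1 ≤ m)]) <;>
      (try norm_num [Matrix.vecHead, Matrix.vecTail]) <;> (try norm_cast) <;> (try omega)
  · rw [sum_count _ 0 0 _ (by omega)
        (fun i => by split_ifs <;> (try norm_num) <;> (exfalso; omega))] <;>
      (try rw [Nat.sub_sub_self (by omega : 1 ≤ m)]) <;>
      (try norm_num [Matrix.vecHead, Matrix.vecTail]) <;> (try norm_cast) <;> (try omega)
  · rw [sum_count _ 0 0 _ (by omega)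
        (fun i => by split_ifs <;> (try norm_num) <;> (exfalso; omega))] <;>
      (try rw [Nat.sub_sub_self (by omega : 1 ≤ m)]) <;>
      (try norm_num [Matrix.vecHead, Matrix.vecTail]) <;> (try norm_cast) <;> (try omega)
  · rw [sum_count _ m (m+1) _ (by omega)
        (fun i => by split_ifs <;> (try norm_num) <;> (exfalso; omega))] <;>
      (try rw [Nat.sub_sub_self (by omega : 1 ≤ m)]) <;>
      (try norm_num [Matrix.vecHead, Matrix.vecTail]) <;> (try norm_cast) <;> (try omega)
  · rw [sum_count _ 0 0 _ (by omega)
        (fun i => by split_ifs <;> (try norm_num) <;> (exfalso; omega))] <;>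
      (try rw [Nat.sub_sub_self (by omega : 1 ≤ m)]) <;>
      (try norm_num [Matrix.vecHead, Matrix.vecTail]) <;> (try norm_cast) <;> (try omega)
  · rw [sum_count _ m (m+1) _ (by omega)
        (fun i => by split_ifs <;> (try norm_num) <;> (exfalso; omega))] <;>
      (try rw [Nat.sub_sub_self (by omega : 1 ≤ m)]) <;>
      (try norm_num [Matrix.vecHead, Matrix.vecTail]) <;> (try norm_cast) <;> (try omega)
  · rw [sum_count _ 0 0 _ (by omega)
        (fun i => by split_ifs <;> (try norm_num) <;> (exfalso; omega))] <;>
      (try rw [Nat.sub_sub_self (by omega : 1 ≤ m)]) <;>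
      (try norm_num [Matrix.vecHead, Matrix.vecTail]) <;> (try norm_cast) <;> (try omega)
  · rw [sum_count _ 0 0 _ (by omega)
        (fun i => by split_ifs <;> (try norm_num) <;> (exfalso; omega))] <;>
      (try rw [Nat.sub_sub_self (by omega : 1 ≤ m)]) <;>
      (try norm_num [Matrix.vecHead, Matrix.vecTail]) <;> (try norm_cast) <;> (try omega)
  · rw [sum_count _ 0 0 _ (by omega)
        (fun i => by split_ifs <;> (try norm_num) <;> (exfalso; omega))] <;>
      (try rw [Nat.sub_sub_self (by omega : 1 ≤ m)]) <;>
      (try norm_num [Matrix.vecHead, Matrix.vecTail]) <;> (try norm_cast) <;> (try omega)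
  · rw [sum_count _ 0 0 _ (by omega)
        (fun i => by split_ifs <;> (try norm_num) <;> (exfalso; omega))] <;>
      (try rw [Nat.sub_sub_self (by omega : 1 ≤ m)]) <;>
      (try norm_num [Matrix.vecHead, Matrix.vecTail]) <;> (try norm_cast) <;> (try omega)
  · rw [sum_count _ 0 0 _ (by omega)
        (fun i => by split_ifs <;> (try norm_num) <;> (exfalso; omega))] <;>
      (try rw [Nat.sub_sub_self (by omega : 1 ≤ m)]) <;>
      (try norm_num [Matrix.vecHead, Matrix.vecTail]) <;> (try norm_cast) <;> (try omega)
  · rw [sum_count _ (m+n) (m+n+1) _ (by omega)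
        (fun i => by split_ifs <;> (try norm_num) <;> (exfalso; omega))] <;>
      (try rw [Nat.sub_sub_self (by omega : 1 ≤ m)]) <;>
      (try norm_num [Matrix.vecHead, Matrix.vecTail]) <;> (try norm_cast) <;> (try omega)

set_option maxHeartbeats 2000000 in
lemma adj_eq (m n : ℕ) (hn : 2 ≤ n) (hnm : n ≤ m) :
    (suspGraph m n).adjMatrix ℝ = Umat m n * Mcoef * (Umat m n)ᵀ - 1 := by
  ext i j
  have hi := i.isLt
  have hj := j.isLt
  rw [SimpleGraph.adjMatrix_apply]
  simp only [SimpleGraph.adjMatrix_apply, suspGraph, SimpleGraph.fromRel_adj,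
    Matrix.sub_apply, Matrix.one_apply, Matrix.mul_apply, Fin.sum_univ_five,
    Matrix.transpose_apply, Umat, Mcoef, ne_eq, Fin.ext_iff]
  simp only [Matrix.cons_val', Matrix.cons_val_zero, Matrix.cons_val_one, Matrix.head_cons,
    Matrix.empty_val', Matrix.cons_val_fin_one, Matrix.head_fin_const, Matrix.of_apply,
    Matrix.cons_val_succ, Matrix.cons_val]
  norm_num
  split_ifs <;> (try norm_num) <;> (exfalso; omega)

set_option maxHeartbeats 1000000 in
lemma one_sub_eq (m n : ℕ) :
    (1 : Matrix (Fin 5) (Fin 5) ℝ) - Mcoef * Gram m n =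
      !![1-(m:ℝ),0,-1,0,-1; 0,1-(n:ℝ),0,-1,-1; 0,-1,1,-1,1; -1,0,-1,1,1;
         1-(m:ℝ),1-(n:ℝ),0,0,0] := by
  ext k l
  fin_cases k <;> fin_cases l <;>
    simp [Mcoef, Gram, Matrix.mul_apply, Fin.sum_univ_five, Matrix.one_apply,
      Matrix.vecHead, Matrix.vecTail] <;> ring

set_option maxHeartbeats 1000000 in
lemma det_five (m n : ℕ) :
    Matrix.det !![1-(m:ℝ),0,-1,0,-1; 0,1-(n:ℝ),0,-1,-1; 0,-1,1,-1,1; -1,0,-1,1,1;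
         1-(m:ℝ),1-(n:ℝ),0,0,0] =
    -(4 * (m : ℝ) * (n : ℝ) - 5 * ((m : ℝ) + (n : ℝ)) + 6) := by
  simp [Matrix.det_succ_row_zero, Fin.sum_univ_succ, Fin.zero_succAbove,
    Fin.succ_succAbove_zero, Fin.succ_succAbove_one, Matrix.submatrix_apply,
    Matrix.submatrix_submatrix, Matrix.det_unique, Fin.succ_zero_eq_one, Fin.succ_one_eq_two]
  simp [Fin.succAbove, Fin.castSucc, Fin.castAdd, Fin.castLE, Fin.lt_def, Fin.succ,
    Matrix.vecHead, Matrix.vecTail]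
  simp (config := { decide := true }) [Matrix.vecHead, Matrix.vecTail,
    show ((3:Fin 4):ℕ) = 3 from rfl, show ((2:Fin 4):ℕ) = 2 from rfl,
    show ((1:Fin 4):ℕ) = 1 from rfl, show ((2:Fin 3):ℕ) = 2 from rfl,
    show ((1:Fin 3):ℕ) = 1 from rfl, show ((1:Fin 2):ℕ) = 1 from rfl]
  ring

/-- For all integers `m ≥ n ≥ 2`, the determinant of the adjacency matrix of
the suspension graph `S(m,n)` equals `(−1)^(m+n) · (4mn − 5(m+n) + 6)`. -/
theorem det_adjMatrix_suspGraph (m n : ℕ) (hn : 2 ≤ n) (hnm : n ≤ m) :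
    ((suspGraph m n).adjMatrix ℝ).det =
      (-1) ^ (m + n) * (4 * (m : ℝ) * (n : ℝ) - 5 * ((m : ℝ) + (n : ℝ)) + 6) := by
  rw [adj_eq m n hn hnm]
  have h1 : Umat m n * Mcoef * (Umat m n)ᵀ - 1
      = -(1 - Umat m n * (Mcoef * (Umat m n)ᵀ)) := by
    rw [neg_sub, Matrix.mul_assoc]
  rw [h1, Matrix.det_neg, Matrix.det_one_sub_mul_comm, Matrix.mul_assoc,
    gram_eq m n hn hnm, one_sub_eq, det_five, Fintype.card_fin, pow_succ]
  ring
end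

section
/- For all integers m ≥ n ≥ 2 with m + n > 4, the number −1 is an eigenvalue of the adjacency matrix A(B_{m,n}) with multiplicity exactly m + n − 4; equivalently, the rank of the matrix I + A(B_{m,n}) equals 4. -/
set_option maxHeartbeats 1000000

open Polynomial Matrix


open Polynomial Matrix

lemma aux_charpoly_conj {n R : Type*} [Fintype n] [DecidableEq n] [CommRing R]
    (U V M : Matrix n n R) (h1 : U * V = 1) (h2 : V * U = 1) :
    (U * M * V).charpoly = M.charpoly := by
  have hmap : (U.map (C : R →+* R[X])) * (V.map C) = 1 := by
    rw [← Matrix.map_mul, h1, Matrix.map_one _ (map_zero C) (map_one C)]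
  have hchar : charmatrix (U * M * V) = U.map C * charmatrix M * V.map C := by
    have hc : U.map (C : R →+* R[X]) * Matrix.scalar n X * V.map C = Matrix.scalar n X := by
      rw [mul_assoc, (Matrix.scalar_commute (X : R[X]) (Commute.all X) (V.map C)).eq,
        ← mul_assoc, hmap, one_mul]
    rw [charmatrix, charmatrix, mul_sub, sub_mul, hc]
    congr 1
    simp only [RingHom.mapMatrix_apply, Matrix.map_mul]
  rw [Matrix.charpoly, Matrix.charpoly, hchar, Matrix.det_mul, Matrix.det_mul]
  have : (U.map (C : R →+* R[X])).det * (V.map C).det = 1 := by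
    rw [← Matrix.det_mul, hmap, Matrix.det_one]
  calc (U.map (C : R →+* R[X])).det * (charmatrix M).det * (V.map C).det
      = (charmatrix M).det * ((U.map (C : R →+* R[X])).det * (V.map C).det) := by ring
    _ = (charmatrix M).det := by rw [this, mul_one]

lemma aux_charpoly_diagonal {n R : Type*} [Fintype n] [DecidableEq n] [CommRing R]
    (d : n → R) : (Matrix.diagonal d).charpoly = ∏ i, (X - C (d i)) := by
  rw [Matrix.charpoly]
  have : charmatrix (Matrix.diagonal d) = Matrix.diagonal fun i => X - C (d i) := by
    ext i j
    by_cases h : i = j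
    · subst h; simp
    · simp [h, Matrix.diagonal_apply_ne _ h]
  rw [this, Matrix.det_diagonal]

lemma aux_rootMult {n : Type*} [Fintype n] [DecidableEq n]
    (f : n → ℝ) (r : ℝ) :
    (∏ i, (X - C (f i))).rootMultiplicity r = Fintype.card {i // f i = r} := by
  classical
  have h1 : (∏ i, (X - C (f i))) = ((Finset.univ.val.map f).map fun a => X - C a).prod := by
    rw [Multiset.map_map]; rfl
  rw [← Polynomial.count_roots, h1, Polynomial.roots_multiset_prod_X_sub_C]
  rw [Multiset.count_map, Fintype.card_subtype]
  rw [Finset.card, Finset.filter_val]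
  congr 1
  apply Multiset.filter_congr
  intro x _
  exact eq_comm


lemma bridge_entry (m n : ℕ) (i j : Fin (m+n)) :
    (1 + (bridgeGraph m n).adjMatrix ℝ) i j =
      if ((i:ℕ) < m ∧ (j:ℕ) < m) ∨ (m ≤ (i:ℕ) ∧ m ≤ (j:ℕ)) ∨
         ((i:ℕ)+1 = m ∧ (j:ℕ) = m) ∨ ((j:ℕ)+1 = m ∧ (i:ℕ) = m) then 1 else 0 := by
  have hij : (i = j) ↔ ((i:ℕ) = (j:ℕ)) := Fin.ext_iff
  rw [Matrix.add_apply, SimpleGraph.adjMatrix_apply]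
  simp only [Matrix.add_apply, Matrix.one_apply, SimpleGraph.adjMatrix_apply, bridgeGraph,
    SimpleGraph.fromRel_adj, ne_eq, hij]
  split_ifs <;> first | (exfalso; omega) | norm_num

private def ind (P : Prop) [Decidable P] : ℝ := if P then 1 else 0

private lemma ind_pos {P : Prop} [Decidable P] (h : P) : ind P = 1 := if_pos h
private lemma ind_neg {P : Prop} [Decidable P] (h : ¬P) : ind P = 0 := if_neg h


private lemma ind_mul (P Q : Prop) [Decidable P] [Decidable Q] :
    ind P * ind Q = ind (P ∧ Q) := by
  by_cases h1 : P <;> by_cases h2 : Q <;> simp [ind, h1, h2]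

private lemma ind_four (C1 C2 C3 C4 T : Prop) [Decidable C1] [Decidable C2] [Decidable C3]
    [Decidable C4] [Decidable T] (hT : T ↔ C1 ∨ C2 ∨ C3 ∨ C4)
    (h12 : ¬(C1 ∧ C2)) (h13 : ¬(C1 ∧ C3)) (h14 : ¬(C1 ∧ C4)) (h23 : ¬(C2 ∧ C3))
    (h24 : ¬(C2 ∧ C4)) (h34 : ¬(C3 ∧ C4)) :
    ind T = ind C1 + ind C2 + ind C3 + ind C4 := by
  by_cases h1 : C1 <;> by_cases h2 : C2 <;> by_cases h3 : C3 <;> by_cases h4 : C4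
  all_goals first
    | exact absurd (⟨h1, h2⟩ : _ ∧ _) h12
    | exact absurd (⟨h1, h3⟩ : _ ∧ _) h13
    | exact absurd (⟨h1, h4⟩ : _ ∧ _) h14
    | exact absurd (⟨h2, h3⟩ : _ ∧ _) h23
    | exact absurd (⟨h2, h4⟩ : _ ∧ _) h24
    | exact absurd (⟨h3, h4⟩ : _ ∧ _) h34
    | simp [ind, hT, h1, h2, h3, h4]

lemma bridge_fac (m n : ℕ) :
    1 + (bridgeGraph m n).adjMatrix ℝ =
      (Matrix.of fun (i : Fin (m+n)) (k : Fin 4) =>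
        ![ind ((i:ℕ) < m), ind ((i:ℕ)+1 = m), ind (m ≤ (i:ℕ)), ind ((i:ℕ) = m)] k) *
      (Matrix.of fun (k : Fin 4) (j : Fin (m+n)) =>
        ![ind ((j:ℕ) < m), ind ((j:ℕ) = m), ind (m ≤ (j:ℕ)), ind ((j:ℕ)+1 = m)] k) := by
  ext i j
  rw [bridge_entry m n i j, Matrix.mul_apply, Fin.sum_univ_four]
  simp only [Matrix.of_apply, Matrix.cons_val_zero, Matrix.cons_val_one, Matrix.head_cons,
    Matrix.cons_val_two, Matrix.tail_cons, Matrix.cons_val_three]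
  rw [ind_mul, ind_mul, ind_mul, ind_mul,
    show (if ((i:ℕ) < m ∧ (j:ℕ) < m) ∨ (m ≤ (i:ℕ) ∧ m ≤ (j:ℕ)) ∨
         ((i:ℕ)+1 = m ∧ (j:ℕ) = m) ∨ ((j:ℕ)+1 = m ∧ (i:ℕ) = m) then (1:ℝ) else 0) =
      ind (((i:ℕ) < m ∧ (j:ℕ) < m) ∨ (m ≤ (i:ℕ) ∧ m ≤ (j:ℕ)) ∨
         ((i:ℕ)+1 = m ∧ (j:ℕ) = m) ∨ ((j:ℕ)+1 = m ∧ (i:ℕ) = m)) from rfl]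
  exact ind_four _ _ _ _ _ (by tauto) (by omega) (by omega) (by omega) (by omega) (by omega)
    (by omega)

lemma bridge_rank_le (m n : ℕ) :
    (1 + (bridgeGraph m n).adjMatrix ℝ).rank ≤ 4 := by
  rw [bridge_fac m n]
  exact le_trans (Matrix.rank_mul_le_right _ _)
    (le_trans (Matrix.rank_le_card_height _) (by simp))

lemma bridge_rank_ge (m n : ℕ) (hn : 2 ≤ n) (hnm : n ≤ m) (h4 : 4 < m + n) :
    4 ≤ (1 + (bridgeGraph m n).adjMatrix ℝ).rank := by
  have hm3 : 3 ≤ m := by omega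
  set B := 1 + (bridgeGraph m n).adjMatrix ℝ with hB
  set f : Fin 4 → Fin (m+n) :=
    ![⟨0, by omega⟩, ⟨m-1, by omega⟩, ⟨m, by omega⟩, ⟨m+n-1, by omega⟩] with hf
  have hsub : B.submatrix f f = !![1,1,0,0; 1,1,1,0; 0,1,1,1; 0,0,1,1] := by
    ext i j
    fin_cases i <;> fin_cases j <;>
      rw [Matrix.submatrix_apply, hB, bridge_entry] <;>
      norm_num [hf] <;>
      first
        | (rw [if_pos (by omega)])
        | (rw [if_neg (by omega)])
        | omega
        | skip
  have h1 : ((1 : Matrix (Fin (m+n)) (Fin (m+n)) ℝ).submatrix f (Equiv.refl _)) * B *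
      ((1 : Matrix (Fin (m+n)) (Fin (m+n)) ℝ).submatrix (Equiv.refl _) f)
      = B.submatrix f f := by
    rw [Matrix.one_submatrix_mul f (Equiv.refl _) B, Matrix.mul_submatrix_one (Equiv.refl _) f]
    simp [Matrix.submatrix_submatrix, Function.comp]
  have hdet : (!![1,1,0,0; 1,1,1,0; 0,1,1,1; 0,0,1,1] : Matrix (Fin 4) (Fin 4) ℝ).det = -1 := by
    simp [Matrix.det_succ_row_zero, Fin.sum_univ_succ, Fin.succAbove]
  have hrank4 : (B.submatrix f f).rank = 4 := by
    rw [hsub]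
    have := Matrix.rank_of_isUnit (!![1,1,0,0; 1,1,1,0; 0,1,1,1; 0,0,1,1] : Matrix (Fin 4) (Fin 4) ℝ)
      ((Matrix.isUnit_iff_isUnit_det _).2 (by rw [hdet]; exact isUnit_one.neg))
    simpa using this
  calc (4:ℕ) = (B.submatrix f f).rank := hrank4.symm
    _ = (((1:Matrix (Fin (m+n)) (Fin (m+n)) ℝ).submatrix f (Equiv.refl _)) * B *
        ((1:Matrix (Fin (m+n)) (Fin (m+n)) ℝ).submatrix (Equiv.refl _) f)).rank := by rw [h1]
    _ ≤ (((1:Matrix (Fin (m+n)) (Fin (m+n)) ℝ).submatrix f (Equiv.refl _)) * B).rank :=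
        Matrix.rank_mul_le_left _ _
    _ ≤ B.rank := Matrix.rank_mul_le_right _ _

/-- For all integers `m ≥ n ≥ 2` with `m + n > 4`, the number `−1` is an
eigenvalue of `A(B_{m,n})` with multiplicity exactly `m + n − 4` (multiplicity as a root of
the characteristic polynomial `det (xI − A)`); equivalently, the rank of `I + A(B_{m,n})`
equals `4`. -/
theorem neg_one_eigenvalue_bridgeGraph (m n : ℕ) (hn : 2 ≤ n) (hnm : n ≤ m)
    (h4 : 4 < m + n) :
    ((bridgeGraph m n).adjMatrix ℝ).charpoly.rootMultiplicity (-1) = m + n - 4 ∧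
    (1 + (bridgeGraph m n).adjMatrix ℝ).rank = 4 := by
  have hrank : (1 + (bridgeGraph m n).adjMatrix ℝ).rank = 4 :=
    le_antisymm (bridge_rank_le m n) (bridge_rank_ge m n hn hnm h4)
  refine ⟨?_, hrank⟩
  have hB : (1 + (bridgeGraph m n).adjMatrix ℝ).IsHermitian := by
    rw [Matrix.IsHermitian, Matrix.conjTranspose_eq_transpose_of_trivial,
      Matrix.transpose_add, Matrix.transpose_one, SimpleGraph.transpose_adjMatrix]
  have hUs : (hB.eigenvectorUnitary : Matrix (Fin (m+n)) (Fin (m+n)) ℝ) *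
      star (hB.eigenvectorUnitary : Matrix (Fin (m+n)) (Fin (m+n)) ℝ) = 1 :=
    Matrix.mem_unitaryGroup_iff.mp hB.eigenvectorUnitary.2
  have hsU : star (hB.eigenvectorUnitary : Matrix (Fin (m+n)) (Fin (m+n)) ℝ) *
      (hB.eigenvectorUnitary : Matrix (Fin (m+n)) (Fin (m+n)) ℝ) = 1 :=
    Matrix.mem_unitaryGroup_iff'.mp hB.eigenvectorUnitary.2
  have hA : (bridgeGraph m n).adjMatrix ℝ =
      (hB.eigenvectorUnitary : Matrix (Fin (m+n)) (Fin (m+n)) ℝ) *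
        Matrix.diagonal (fun i => (RCLike.ofReal (hB.eigenvalues i) : ℝ) - 1) *
        star (hB.eigenvectorUnitary : Matrix (Fin (m+n)) (Fin (m+n)) ℝ) := by
    have hD : Matrix.diagonal (fun i => (RCLike.ofReal (hB.eigenvalues i) : ℝ) - 1)
        = Matrix.diagonal ((RCLike.ofReal : ℝ → ℝ) ∘ hB.eigenvalues) - 1 := by
      ext i j
      rcases eq_or_ne i j with h | h
      · subst h; simp
      · simp [Matrix.diagonal_apply_ne _ h, Matrix.one_apply_ne h]
    rw [hD, Matrix.mul_sub, mul_one, Matrix.sub_mul, hUs, ← Unitary.conjStarAlgAut_apply (S := ℝ), ← hB.spectral_theorem]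
    exact (add_sub_cancel_left 1 _).symm
  have hchar : ((bridgeGraph m n).adjMatrix ℝ).charpoly
      = ∏ i, (X - C ((RCLike.ofReal (hB.eigenvalues i) : ℝ) - 1)) := by
    conv_lhs => rw [hA]
    rw [aux_charpoly_conj _ _ _ hUs hsU, aux_charpoly_diagonal]
  rw [hchar, aux_rootMult]
  have hcard1 : Fintype.card {i // (RCLike.ofReal (hB.eigenvalues i) : ℝ) - 1 = -1}
      = Fintype.card {i // hB.eigenvalues i = 0} :=
    Fintype.card_congr (Equiv.subtypeEquivRight fun i => by
      rw [sub_eq_neg_self, RCLike.ofReal_eq_zero])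
  have hcard2 : Fintype.card {i // hB.eigenvalues i ≠ 0} = 4 := by
    rw [← hB.rank_eq_card_non_zero_eigs]; exact hrank
  have hcompl := Fintype.card_subtype_compl (fun i : Fin (m+n) => hB.eigenvalues i ≠ 0)
  have he : Fintype.card {i // ¬ hB.eigenvalues i ≠ 0}
      = Fintype.card {i // hB.eigenvalues i = 0} :=
    Fintype.card_congr (Equiv.subtypeEquivRight fun i => not_not)
  rw [hcard1, ← he, hcompl, hcard2, Fintype.card_fin]
end

section
/- For all integers m ≥ n ≥ 2, the largest eigenvalue λ₁ of the adjacency matrix A(B_{m,n}) satisfies m − 1 ≤ λ₁ ≤ m; if moreover m = n, then m − (1 − 1/m) ≤ λ₁ ≤ m. -/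
open Finset Polynomial Matrix

/-- entry function on ℕ -/
noncomputable def bridgeEnt (m : ℕ) (i j : ℕ) : ℝ :=
  if i ≠ j ∧ ((i < m ∧ j < m) ∨ (m ≤ i ∧ m ≤ j) ∨ (i + 1 = m ∧ j = m) ∨ (j + 1 = m ∧ i = m))
  then 1 else 0

lemma bridgeEnt_nonneg (m i j : ℕ) : 0 ≤ bridgeEnt m i j := by
  unfold bridgeEnt; split_ifs <;> norm_num

lemma adjMatrix_bridge_eq (m n : ℕ) (i j : Fin (m + n)) :
    (bridgeGraph m n).adjMatrix ℝ i j = bridgeEnt m (i : ℕ) (j : ℕ) := by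
  rw [SimpleGraph.adjMatrix_apply, bridgeEnt]
  congr 1
  simp only [bridgeGraph, SimpleGraph.fromRel_adj, ne_eq, Fin.ext_iff, eq_iff_iff]
  tauto

lemma eval_charpoly' {N : ℕ} (M : Matrix (Fin N) (Fin N) ℝ) (μ : ℝ) :
    M.charpoly.eval μ = (μ • (1 : Matrix (Fin N) (Fin N) ℝ) - M).det := by
  rw [Matrix.charpoly, ← Polynomial.coe_evalRingHom, RingHom.map_det]
  congr 1
  ext i j
  by_cases h : i = j <;>
    simp [charmatrix_apply, Matrix.one_apply, h]

lemma isRoot_iff_eigvec {N : ℕ} (M : Matrix (Fin N) (Fin N) ℝ) (μ : ℝ) :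
    M.charpoly.IsRoot μ ↔ ∃ v : Fin N → ℝ, v ≠ 0 ∧ M *ᵥ v = μ • v := by
  rw [Polynomial.IsRoot, eval_charpoly', ← Matrix.exists_mulVec_eq_zero_iff]
  constructor
  · rintro ⟨v, hv, h⟩
    refine ⟨v, hv, ?_⟩
    rw [Matrix.sub_mulVec, Matrix.smul_mulVec, Matrix.one_mulVec, sub_eq_zero] at h
    exact h.symm
  · rintro ⟨v, hv, h⟩
    refine ⟨v, hv, ?_⟩
    rw [Matrix.sub_mulVec, Matrix.smul_mulVec, Matrix.one_mulVec, h, sub_self]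

lemma hasEigen_iff_eigvec {N : ℕ} (M : Matrix (Fin N) (Fin N) ℝ) (μ : ℝ) :
    Module.End.HasEigenvalue (Matrix.toEuclideanLin M) μ ↔
      ∃ v : Fin N → ℝ, v ≠ 0 ∧ M *ᵥ v = μ • v := by
  constructor
  · intro h
    obtain ⟨x, hx⟩ := h.exists_hasEigenvector
    refine ⟨(WithLp.equiv 2 (Fin N → ℝ)) x, ?_, ?_⟩
    · simpa using hx.2
    · have := Module.End.mem_eigenspace_iff.mp hx.1
      rw [Matrix.toEuclideanLin_apply] at this
      have := congrArg (WithLp.equiv 2 (Fin N → ℝ)) this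
      simpa using this
  · rintro ⟨v, hv, h⟩
    refine Module.End.hasEigenvalue_of_hasEigenvector
      (x := (WithLp.equiv 2 (Fin N → ℝ)).symm v) ⟨Module.End.mem_eigenspace_iff.mpr ?_, ?_⟩
    · rw [Matrix.toEuclideanLin_apply]
      simp [h]
    · simpa using hv

lemma hasEigen_toLin'_of_eigvec {N : ℕ} (M : Matrix (Fin N) (Fin N) ℝ) (μ : ℝ)
    (v : Fin N → ℝ) (hv : v ≠ 0) (h : M *ᵥ v = μ • v) :
    Module.End.HasEigenvalue (Matrix.toLin' M) μ :=
  Module.End.hasEigenvalue_of_hasEigenvector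
    ⟨Module.End.mem_eigenspace_iff.mpr (by rw [Matrix.toLin'_apply, h]), hv⟩

/-- row sum bound -/
lemma bridgeEnt_rowsum_le {m n : ℕ} (hn : 2 ≤ n) (hnm : n ≤ m) (i : ℕ) (hi : i < m + n) :
    ∑ j ∈ Finset.range (m + n), bridgeEnt m i j ≤ (m : ℝ) := by
  have hm : 2 ≤ m := hn.trans hnm
  rcases lt_or_ge i m with him | him
  · calc ∑ j ∈ Finset.range (m + n), bridgeEnt m i j
        ≤ ∑ j ∈ Finset.range (m + n), (if j ≤ m ∧ j ≠ i then (1:ℝ) else 0) := by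
          refine Finset.sum_le_sum fun j _ => ?_
          unfold bridgeEnt
          split_ifs with h1 h2 <;> norm_num <;> omega
      _ = ((Finset.range (m + n)).filter (fun j => j ≤ m ∧ j ≠ i)).card := by
          rw [Finset.sum_boole]
      _ = (m : ℝ) := by
          have : (Finset.range (m + n)).filter (fun j => j ≤ m ∧ j ≠ i)
              = (Finset.range (m + 1)).erase i := by
            ext j
            simp only [Finset.mem_filter, Finset.mem_range, Finset.mem_erase]
            omega
          rw [this, Finset.card_erase_of_mem (by simp; omega), Finset.card_range]
          push_cast
          ring
  · calc ∑ j ∈ Finset.range (m + n), bridgeEnt m i j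
        ≤ ∑ j ∈ Finset.range (m + n), (if m - 1 ≤ j ∧ j ≠ i then (1:ℝ) else 0) := by
          refine Finset.sum_le_sum fun j _ => ?_
          unfold bridgeEnt
          split_ifs with h1 h2 <;> norm_num <;> omega
      _ = ((Finset.range (m + n)).filter (fun j => m - 1 ≤ j ∧ j ≠ i)).card := by
          rw [Finset.sum_boole]
      _ ≤ (m : ℝ) := by
          have : (Finset.range (m + n)).filter (fun j => m - 1 ≤ j ∧ j ≠ i)
              = (Finset.Ico (m - 1) (m + n)).erase i := by
            ext j
            simp only [Finset.mem_filter, Finset.mem_range, Finset.mem_erase, Finset.mem_Ico]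
            omega
          rw [this, Finset.card_erase_of_mem (by simp [Finset.mem_Ico]; omega),
            Nat.card_Ico]
          have : m + n - (m - 1) - 1 = n := by omega
          rw [this]
          exact_mod_cast hnm

lemma bridgeEnt_inner_lb {m n : ℕ} (hm : 2 ≤ m) (i : ℕ) (him : i < m) :
    (m : ℝ) - 1 ≤ ∑ j ∈ Finset.range (m + n), bridgeEnt m i j * (if j < m then 1 else 0) := by
  calc (m : ℝ) - 1
      = ((Finset.range (m + n)).filter (fun j => j < m ∧ j ≠ i)).card := by
        have : (Finset.range (m + n)).filter (fun j => j < m ∧ j ≠ i)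
            = (Finset.range m).erase i := by
          ext j
          simp only [Finset.mem_filter, Finset.mem_range, Finset.mem_erase]
          omega
        rw [this, Finset.card_erase_of_mem (by simpa using him), Finset.card_range]
        have h1 : 1 ≤ m := by omega
        push_cast [Nat.cast_sub h1]
        ring
    _ = ∑ j ∈ Finset.range (m + n), (if j < m ∧ j ≠ i then (1:ℝ) else 0) := by
        rw [Finset.sum_boole]
    _ ≤ ∑ j ∈ Finset.range (m + n), bridgeEnt m i j * (if j < m then 1 else 0) := by
        refine Finset.sum_le_sum fun j _ => ?_
        unfold bridgeEnt
        split_ifs <;> norm_num <;> omega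

lemma bridgeEnt_sum1_lb {m n : ℕ} (hm : 2 ≤ m) :
    (m : ℝ) * ((m : ℝ) - 1) ≤
      ∑ i ∈ Finset.range (m + n),
        (∑ j ∈ Finset.range (m + n), bridgeEnt m i j * (if j < m then 1 else 0)) *
          (if i < m then 1 else 0) := by
  calc (m : ℝ) * ((m : ℝ) - 1)
      = ∑ i ∈ Finset.range (m + n), (if i < m then ((m : ℝ) - 1) else 0) := by
        rw [Finset.sum_ite, Finset.sum_const, Finset.sum_const]
        have : (Finset.range (m + n)).filter (fun i => i < m) = Finset.range m := by
          ext i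
          simp only [Finset.mem_filter, Finset.mem_range]
          omega
        rw [this, Finset.card_range]
        simp [mul_comm]
    _ ≤ _ := by
        refine Finset.sum_le_sum fun i _ => ?_
        by_cases him : i < m
        · simpa [him] using bridgeEnt_inner_lb (n := n) hm i him
        · simp only [him, if_neg, if_false, mul_zero, le_refl]

lemma bridgeEnt_row2_lb {m : ℕ} (hm : 2 ≤ m) (i : ℕ) (hi : i < m + m) :
    ((m : ℝ) - 1) + (if i + 1 = m ∨ i = m then 1 else 0) ≤
      ∑ j ∈ Finset.range (m + m), bridgeEnt m i j := by
  rcases lt_or_ge i m with him | him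
  · have h2 : (if i + 1 = m ∨ i = m then (1:ℝ) else 0) = (if i + 1 = m then 1 else 0) := by
      split_ifs <;> norm_num <;> omega
    rw [h2]
    calc ((m : ℝ) - 1) + (if i + 1 = m then (1:ℝ) else 0)
        = (∑ j ∈ Finset.range (m + m), (if j < m ∧ j ≠ i then (1:ℝ) else 0)) +
          (∑ j ∈ Finset.range (m + m), (if i + 1 = m ∧ j = m then (1:ℝ) else 0)) := by
          congr 1
          · rw [Finset.sum_boole]
            have : (Finset.range (m + m)).filter (fun j => j < m ∧ j ≠ i)
                = (Finset.range m).erase i := by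
              ext j
              simp only [Finset.mem_filter, Finset.mem_range, Finset.mem_erase]
              omega
            rw [this, Finset.card_erase_of_mem (by simpa using him), Finset.card_range]
            push_cast [Nat.cast_sub (by omega : 1 ≤ m)]
            ring
          · by_cases hb : i + 1 = m
            · simp only [hb, true_and, if_true]
              rw [Finset.sum_ite_eq' (Finset.range (m + m)) m (fun _ => (1:ℝ))]
              simp only [Finset.mem_range]
              rw [if_pos (by omega)]
            · simp [hb]
      _ ≤ _ := by
          rw [← Finset.sum_add_distrib]
          refine Finset.sum_le_sum fun j _ => ?_
          unfold bridgeEnt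
          split_ifs <;> norm_num <;> omega
  · have h2 : (if i + 1 = m ∨ i = m then (1:ℝ) else 0) = (if i = m then 1 else 0) := by
      split_ifs <;> norm_num <;> omega
    rw [h2]
    calc ((m : ℝ) - 1) + (if i = m then (1:ℝ) else 0)
        = (∑ j ∈ Finset.range (m + m), (if m ≤ j ∧ j ≠ i then (1:ℝ) else 0)) +
          (∑ j ∈ Finset.range (m + m), (if i = m ∧ j = m - 1 then (1:ℝ) else 0)) := by
          congr 1
          · rw [Finset.sum_boole]
            have : (Finset.range (m + m)).filter (fun j => m ≤ j ∧ j ≠ i)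
                = (Finset.Ico m (m + m)).erase i := by
              ext j
              simp only [Finset.mem_filter, Finset.mem_range, Finset.mem_erase, Finset.mem_Ico]
              omega
            rw [this, Finset.card_erase_of_mem (by simp [Finset.mem_Ico]; omega), Nat.card_Ico]
            have hc : m + m - m - 1 = m - 1 := by omega
            rw [hc]
            push_cast [Nat.cast_sub (by omega : 1 ≤ m)]
            ring
          · by_cases hb : i = m
            · simp only [hb, true_and, if_true]
              rw [Finset.sum_ite_eq' (Finset.range (m + m)) (m - 1) (fun _ => (1:ℝ))]
              simp only [Finset.mem_range]
              rw [if_pos (by omega)]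
            · simp [hb]
      _ ≤ _ := by
          rw [← Finset.sum_add_distrib]
          refine Finset.sum_le_sum fun j _ => ?_
          unfold bridgeEnt
          split_ifs <;> norm_num <;> omega

lemma bridgeEnt_sum2_lb {m : ℕ} (hm : 2 ≤ m) :
    2 * (m : ℝ) * ((m : ℝ) - 1) + 2 ≤
      ∑ i ∈ Finset.range (m + m), ∑ j ∈ Finset.range (m + m), bridgeEnt m i j := by
  calc 2 * (m : ℝ) * ((m : ℝ) - 1) + 2
      = ∑ i ∈ Finset.range (m + m),
          (((m : ℝ) - 1) + (if i + 1 = m ∨ i = m then 1 else 0)) := by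
        rw [Finset.sum_add_distrib, Finset.sum_const, Finset.card_range, Finset.sum_boole]
        have : (Finset.range (m + m)).filter (fun i => i + 1 = m ∨ i = m)
            = {m - 1, m} := by
          ext i
          simp only [Finset.mem_filter, Finset.mem_range, Finset.mem_insert,
            Finset.mem_singleton]
          omega
        rw [this, Finset.card_insert_of_notMem (by simp; omega), Finset.card_singleton]
        push_cast
        ring
    _ ≤ _ := Finset.sum_le_sum fun i hi =>
        bridgeEnt_row2_lb hm i (Finset.mem_range.mp hi)

lemma equivsymm_ne_zero {N : ℕ} (v : Fin N → ℝ) (i : Fin N) (h : v i ≠ 0) :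
    (WithLp.equiv 2 (Fin N → ℝ)).symm v ≠ 0 := by
  intro hz
  apply h
  have := congrArg (fun w => WithLp.equiv 2 (Fin N → ℝ) w i) hz
  simpa using this

lemma inner_euclidean_symm {N : ℕ} (u v : Fin N → ℝ) :
    inner (𝕜 := ℝ) ((WithLp.equiv 2 (Fin N → ℝ)).symm u)
        ((WithLp.equiv 2 (Fin N → ℝ)).symm v) = ∑ i, u i * v i := by
  simp [PiLp.inner_apply, RCLike.inner_apply, conj_trivial]
  exact Finset.sum_congr rfl fun i _ => mul_comm _ _

lemma inner_toEuclideanLin_symm {N : ℕ} (M : Matrix (Fin N) (Fin N) ℝ) (v : Fin N → ℝ) :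
    inner (𝕜 := ℝ) (Matrix.toEuclideanLin M ((WithLp.equiv 2 (Fin N → ℝ)).symm v))
        ((WithLp.equiv 2 (Fin N → ℝ)).symm v) = ∑ i, (M *ᵥ v) i * v i := by
  rw [Matrix.toEuclideanLin_apply]
  show inner (𝕜 := ℝ) ((WithLp.equiv 2 (Fin N → ℝ)).symm (M *ᵥ v))
    ((WithLp.equiv 2 (Fin N → ℝ)).symm v) = _
  exact inner_euclidean_symm _ v

lemma norm_sq_euclidean_symm {N : ℕ} (v : Fin N → ℝ) :
    ‖(WithLp.equiv 2 (Fin N → ℝ)).symm v‖ ^ 2 = ∑ i, v i * v i := by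
  rw [← real_inner_self_eq_norm_sq]
  exact inner_euclidean_symm v v

/-- For all integers `m ≥ n ≥ 2`, the largest eigenvalue `λ₁` of the
adjacency matrix `A(B_{m,n})` (i.e. the largest root of its characteristic polynomial;
all eigenvalues are real since the matrix is symmetric) satisfies `m − 1 ≤ λ₁ ≤ m`;
if moreover `m = n`, then `m − (1 − 1/m) ≤ λ₁ ≤ m`. -/
theorem largest_eigenvalue_bridgeGraph_bounds (m n : ℕ) (hn : 2 ≤ n) (hnm : n ≤ m) :
    ∃ lam : ℝ, ((bridgeGraph m n).adjMatrix ℝ).charpoly.IsRoot lam ∧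
      (∀ mu : ℝ, ((bridgeGraph m n).adjMatrix ℝ).charpoly.IsRoot mu → mu ≤ lam) ∧
      (m : ℝ) - 1 ≤ lam ∧ lam ≤ (m : ℝ) ∧
      (m = n → (m : ℝ) - (1 - 1 / (m : ℝ)) ≤ lam) := by
  classical
  have hm : 2 ≤ m := hn.trans hnm
  have hNpos : 0 < m + n := by omega
  set A := (bridgeGraph m n).adjMatrix ℝ with hA
  have hent : ∀ i j : Fin (m + n), A i j = bridgeEnt m (i : ℕ) (j : ℕ) :=
    adjMatrix_bridge_eq m n
  have hherm : A.IsHermitian := by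
    rw [Matrix.IsHermitian, Matrix.conjTranspose_eq_transpose_of_trivial]
    exact (bridgeGraph m n).isSymm_adjMatrix
  set T := Matrix.toEuclideanLin A with hTdef
  have hsymm : T.IsSymmetric := Matrix.isHermitian_iff_isSymmetric.mp hherm
  haveI : Nontrivial (EuclideanSpace ℝ (Fin (m + n))) := by
    refine ⟨(WithLp.equiv 2 (Fin (m + n) → ℝ)).symm (fun _ => 1), 0, ?_⟩
    exact equivsymm_ne_zero _ ⟨0, hNpos⟩ one_ne_zero
  set lam : ℝ := ⨆ x : {x : EuclideanSpace ℝ (Fin (m + n)) // x ≠ 0},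
      RCLike.re (inner (𝕜 := ℝ) (T x) (x : EuclideanSpace ℝ (Fin (m + n)))) /
        ‖(x : EuclideanSpace ℝ (Fin (m + n)))‖ ^ 2 with hlam
  have heig : Module.End.HasEigenvalue T lam :=
    hsymm.hasEigenvalue_iSup_of_finiteDimensional
  -- the eigenvector of lam
  obtain ⟨v, hv0, hveq⟩ := (hasEigen_iff_eigvec A lam).mp heig
  have hroot : A.charpoly.IsRoot lam := (isRoot_iff_eigvec A lam).mpr ⟨v, hv0, hveq⟩
  -- boundedness of the Rayleigh quotient
  set T' := LinearMap.toContinuousLinearMap T with hT'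
  have hbdd : BddAbove (Set.range fun x : {x : EuclideanSpace ℝ (Fin (m + n)) // x ≠ 0} =>
      RCLike.re (inner (𝕜 := ℝ) (T x) (x : EuclideanSpace ℝ (Fin (m + n)))) /
        ‖(x : EuclideanSpace ℝ (Fin (m + n)))‖ ^ 2) := by
    refine ⟨‖T'‖, ?_⟩
    rintro _ ⟨x, rfl⟩
    have hx : (0:ℝ) < ‖(x : EuclideanSpace ℝ (Fin (m + n)))‖ := norm_pos_iff.mpr x.prop
    rw [div_le_iff₀ (by positivity)]
    have h1 : inner (𝕜 := ℝ) (T x) (x : EuclideanSpace ℝ (Fin (m + n))) ≤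
        ‖T (x : EuclideanSpace ℝ (Fin (m + n)))‖ * ‖(x : EuclideanSpace ℝ (Fin (m + n)))‖ :=
      real_inner_le_norm _ _
    have h2 : ‖T (x : EuclideanSpace ℝ (Fin (m + n)))‖ ≤
        ‖T'‖ * ‖(x : EuclideanSpace ℝ (Fin (m + n)))‖ := T'.le_opNorm x
    calc RCLike.re (inner (𝕜 := ℝ) (T x) (x : EuclideanSpace ℝ (Fin (m + n))))
        = inner (𝕜 := ℝ) (T x) (x : EuclideanSpace ℝ (Fin (m + n))) := rfl
      _ ≤ ‖T (x : EuclideanSpace ℝ (Fin (m + n)))‖ *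
            ‖(x : EuclideanSpace ℝ (Fin (m + n)))‖ := h1
      _ ≤ (‖T'‖ * ‖(x : EuclideanSpace ℝ (Fin (m + n)))‖) *
            ‖(x : EuclideanSpace ℝ (Fin (m + n)))‖ := by
          exact mul_le_mul_of_nonneg_right h2 (norm_nonneg _)
      _ = ‖T'‖ * ‖(x : EuclideanSpace ℝ (Fin (m + n)))‖ ^ 2 := by ring
  -- the Rayleigh quotient of any nonzero w is at most lam
  have hquot_le : ∀ w : Fin (m + n) → ℝ, ∀ i : Fin (m + n), w i ≠ 0 →
      (∑ i, (A *ᵥ w) i * w i) / (∑ i, w i * w i) ≤ lam := by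
    intro w i hwi
    have hx0 : (WithLp.equiv 2 (Fin (m + n) → ℝ)).symm w ≠ 0 := equivsymm_ne_zero w i hwi
    have := le_ciSup hbdd (⟨(WithLp.equiv 2 (Fin (m + n) → ℝ)).symm w, hx0⟩ :
      {x : EuclideanSpace ℝ (Fin (m + n)) // x ≠ 0})
    have hval2 : RCLike.re (inner (𝕜 := ℝ)
        (T ((WithLp.equiv 2 (Fin (m + n) → ℝ)).symm w))
        (((WithLp.equiv 2 (Fin (m + n) → ℝ)).symm w : EuclideanSpace ℝ (Fin (m + n))))) /
        ‖((WithLp.equiv 2 (Fin (m + n) → ℝ)).symm w : EuclideanSpace ℝ (Fin (m + n)))‖ ^ 2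
        = (∑ i, (A *ᵥ w) i * w i) / (∑ i, w i * w i) := by
      rw [norm_sq_euclidean_symm]
      congr 1
      exact inner_toEuclideanLin_symm A w
    rw [hlam]
    exact le_trans (le_of_eq hval2.symm) this
  -- every root is at most lam
  have hmax : ∀ mu : ℝ, A.charpoly.IsRoot mu → mu ≤ lam := by
    intro mu hmu
    obtain ⟨w, hw0, hweq⟩ := (isRoot_iff_eigvec A mu).mp hmu
    obtain ⟨i, hwi⟩ := Function.ne_iff.mp hw0
    have hc : (0:ℝ) < ∑ i, w i * w i :=
      Finset.sum_pos' (fun j _ => mul_self_nonneg _)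
        ⟨i, Finset.mem_univ i, mul_self_pos.mpr hwi⟩
    have hval : (∑ i, (A *ᵥ w) i * w i) / (∑ i, w i * w i) = mu := by
      rw [hweq]
      rw [show ∑ i, (mu • w) i * w i = mu * ∑ i, w i * w i by
        rw [Finset.mul_sum]; exact Finset.sum_congr rfl fun i _ => by
          simp [Pi.smul_apply, smul_eq_mul]; ring]
      field_simp
      exact mul_div_cancel_right₀ mu (by simp only [sq]; exact hc.ne')
    have := hquot_le w i hwi
    rwa [hval] at this
  -- upper bound via Gershgorin
  have hup : lam ≤ (m : ℝ) := by
    have hev : Module.End.HasEigenvalue (Matrix.toLin' A) lam :=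
      hasEigen_toLin'_of_eigvec A lam v hv0 hveq
    obtain ⟨k, hk⟩ := eigenvalue_mem_ball hev
    rw [Metric.mem_closedBall] at hk
    have hdiag : A k k = 0 := by
      rw [hent]; unfold bridgeEnt; simp
    rw [hdiag, Real.dist_eq, sub_zero] at hk
    calc lam ≤ |lam| := le_abs_self lam
      _ ≤ ∑ j ∈ Finset.univ.erase k, ‖A k j‖ := hk
      _ ≤ ∑ j : Fin (m + n), ‖A k j‖ :=
          Finset.sum_le_sum_of_subset_of_nonneg (Finset.erase_subset _ _)
            (fun j _ _ => norm_nonneg _)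
      _ = ∑ j : Fin (m + n), bridgeEnt m (k : ℕ) (j : ℕ) :=
          Finset.sum_congr rfl fun j _ => by
            rw [hent]; exact Real.norm_of_nonneg (bridgeEnt_nonneg _ _ _)
      _ = ∑ j ∈ Finset.range (m + n), bridgeEnt m (k : ℕ) j :=
          Fin.sum_univ_eq_sum_range _ _
      _ ≤ (m : ℝ) := bridgeEnt_rowsum_le hn hnm k k.isLt
  -- lower bound m - 1
  have hlow1 : (m : ℝ) - 1 ≤ lam := by
    set w : Fin (m + n) → ℝ := fun i => if (i : ℕ) < m then 1 else 0 with hw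
    have hw0 : w ⟨0, hNpos⟩ ≠ 0 := by
      show (if (0 : ℕ) < m then (1:ℝ) else 0) ≠ 0
      rw [if_pos (by omega)]
      exact one_ne_zero
    have hq := hquot_le w ⟨0, hNpos⟩ hw0
    have hnum : (m : ℝ) * ((m : ℝ) - 1) ≤ ∑ i, (A *ᵥ w) i * w i := by
      have hrw : ∑ i, (A *ᵥ w) i * w i =
          ∑ i ∈ Finset.range (m + n),
            (∑ j ∈ Finset.range (m + n), bridgeEnt m i j * (if j < m then 1 else 0)) *
              (if i < m then 1 else 0) := by
        rw [← Fin.sum_univ_eq_sum_range (fun i =>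
          (∑ j ∈ Finset.range (m + n), bridgeEnt m i j * (if j < m then 1 else 0)) *
            (if i < m then 1 else 0)) (m + n)]
        refine Finset.sum_congr rfl fun i _ => ?_
        congr 1
        show ∑ j, A i j * w j = _
        rw [← Fin.sum_univ_eq_sum_range (fun j =>
          bridgeEnt m (i : ℕ) j * (if j < m then 1 else 0)) (m + n)]
        exact Finset.sum_congr rfl fun j _ => by rw [hent]
      rw [hrw]
      exact bridgeEnt_sum1_lb hm
    have hden : ∑ i, w i * w i = (m : ℝ) := by
      calc (∑ i, w i * w i)
          = ∑ i ∈ Finset.range (m + n),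
            (if i < m then (1:ℝ) else 0) * (if i < m then 1 else 0) :=
            Fin.sum_univ_eq_sum_range (fun i =>
              (if i < m then (1:ℝ) else 0) * (if i < m then 1 else 0)) (m + n)
        _ = ∑ i ∈ Finset.range (m + n), (if i < m then (1:ℝ) else 0) :=
            Finset.sum_congr rfl fun i _ => by split_ifs <;> ring
        _ = ((Finset.range (m + n)).filter (fun i => i < m)).card := by
            rw [Finset.sum_boole]
        _ = (m : ℝ) := by
            have : (Finset.range (m + n)).filter (fun i => i < m) = Finset.range m := by
              ext i
              simp only [Finset.mem_filter, Finset.mem_range]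
              omega
            rw [this, Finset.card_range]
    rw [hden] at hq
    refine le_trans ?_ hq
    rw [le_div_iff₀ (by positivity : (0:ℝ) < (m:ℝ))]
    calc ((m:ℝ) - 1) * m = (m:ℝ) * ((m:ℝ) - 1) := by ring
      _ ≤ _ := hnum
  -- lower bound in the case m = n
  have hlow2 : m = n → (m : ℝ) - (1 - 1 / (m : ℝ)) ≤ lam := by
    intro hmn
    subst hmn
    set w : Fin (m + m) → ℝ := fun _ => 1 with hw
    have hq := hquot_le w ⟨0, hNpos⟩ one_ne_zero
    have hnum : 2 * (m : ℝ) * ((m : ℝ) - 1) + 2 ≤ ∑ i, (A *ᵥ w) i * w i := by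
      have hrw : ∑ i, (A *ᵥ w) i * w i =
          ∑ i ∈ Finset.range (m + m), ∑ j ∈ Finset.range (m + m), bridgeEnt m i j := by
        rw [← Fin.sum_univ_eq_sum_range (fun i =>
          ∑ j ∈ Finset.range (m + m), bridgeEnt m i j) (m + m)]
        refine Finset.sum_congr rfl fun i _ => ?_
        rw [mul_one]
        show ∑ j, A i j * w j = _
        rw [← Fin.sum_univ_eq_sum_range (fun j => bridgeEnt m (i : ℕ) j) (m + m)]
        exact Finset.sum_congr rfl fun j _ => by rw [hent, mul_one]
      rw [hrw]
      exact bridgeEnt_sum2_lb hm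
    have hden : ∑ i, w i * w i = ((m : ℝ) + m) := by
      simp only [hw, mul_one, Finset.sum_const, Finset.card_univ, Fintype.card_fin,
        nsmul_eq_mul]
      push_cast
      ring
    rw [hden] at hq
    refine le_trans ?_ hq
    rw [le_div_iff₀ (by positivity : (0:ℝ) < (m:ℝ) + m)]
    have hm0 : (m:ℝ) ≠ 0 := by positivity
    calc ((m:ℝ) - (1 - 1 / m)) * ((m:ℝ) + m) = 2 * (m : ℝ) * ((m : ℝ) - 1) + 2 := by
          field_simp
          ring
      _ ≤ _ := hnum
  exact ⟨lam, hroot, hmax, hlow1, hup, hlow2⟩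
end

section
/- For every integer m > 2, the cubic polynomial x³ + (3−m)x² + (2−2m)x − 2 has three real roots θ₁ ≥ θ₂ ≥ θ₃, and its two smallest roots satisfy −3 ≤ θ₂ + θ₃ ≤ −2 and 2/m ≤ θ₂·θ₃ ≤ 2/(m−1). -/
/-- For every integer `m > 2`, the cubic polynomial
`x³ + (3−m)x² + (2−2m)x − 2` has three real roots `θ₁ ≥ θ₂ ≥ θ₃`, and its two smallest roots
satisfy `−3 ≤ θ₂ + θ₃ ≤ −2` and `2/m ≤ θ₂·θ₃ ≤ 2/(m−1)`. -/
theorem cubic_roots_bridgeGraph_bounds (m : ℕ) (hm : 2 < m) :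
    ∃ θ₁ θ₂ θ₃ : ℝ, θ₂ ≤ θ₁ ∧ θ₃ ≤ θ₂ ∧
      (∀ x : ℝ, x ^ 3 + (3 - (m : ℝ)) * x ^ 2 + (2 - 2 * (m : ℝ)) * x - 2 =
        (x - θ₁) * (x - θ₂) * (x - θ₃)) ∧
      -3 ≤ θ₂ + θ₃ ∧ θ₂ + θ₃ ≤ -2 ∧
      2 / (m : ℝ) ≤ θ₂ * θ₃ ∧ θ₂ * θ₃ ≤ 2 / ((m : ℝ) - 1) := by
  have hm3 : (3:ℝ) ≤ (m:ℝ) := by exact_mod_cast hm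
  set M : ℝ := (m:ℝ) with hM
  set F : ℝ → ℝ := fun x => x ^ 3 + (3 - M) * x ^ 2 + (2 - 2 * M) * x - 2 with hF
  have hcont : Continuous F := by fun_prop
  -- θ₃ ∈ (-2,-1)
  obtain ⟨θ₃, hθ₃I, hθ₃⟩ : ∃ θ ∈ Set.Ioo (-2:ℝ) (-1), F θ = 0 := by
    have h := intermediate_value_Ioo (by norm_num : (-2:ℝ) ≤ -1) hcont.continuousOn
    have hmem : (0:ℝ) ∈ Set.Ioo (F (-2)) (F (-1)) := by
      constructor <;> simp only [hF] <;> nlinarith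
    obtain ⟨θ, hθ, h0⟩ := h hmem
    exact ⟨θ, hθ, h0⟩
  -- θ₂ ∈ (-1,0)
  obtain ⟨θ₂, hθ₂I, hθ₂⟩ : ∃ θ ∈ Set.Ioo (-1:ℝ) 0, F θ = 0 := by
    have h := intermediate_value_Ioo' (by norm_num : (-1:ℝ) ≤ 0) hcont.continuousOn
    have hmem : (0:ℝ) ∈ Set.Ioo (F 0) (F (-1)) := by
      constructor <;> simp only [hF] <;> nlinarith
    obtain ⟨θ, hθ, h0⟩ := h hmem
    exact ⟨θ, hθ, h0⟩
  -- θ₁ ∈ (M-1, M)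
  obtain ⟨θ₁, hθ₁I, hθ₁⟩ : ∃ θ ∈ Set.Ioo (M - 1) M, F θ = 0 := by
    have h := intermediate_value_Ioo (by linarith : M - 1 ≤ M) hcont.continuousOn
    have hmem : (0:ℝ) ∈ Set.Ioo (F (M - 1)) (F M) := by
      constructor <;> simp only [hF] <;> nlinarith
    obtain ⟨θ, hθ, h0⟩ := h hmem
    exact ⟨θ, hθ, h0⟩
  obtain ⟨h3l, h3r⟩ := hθ₃I
  obtain ⟨h2l, h2r⟩ := hθ₂I
  obtain ⟨h1l, h1r⟩ := hθ₁I
  simp only [hF] at hθ₁ hθ₂ hθ₃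
  have d12 : θ₁ - θ₂ ≠ 0 := by intro h; nlinarith
  have d13 : θ₁ - θ₃ ≠ 0 := by intro h; nlinarith
  have d23 : θ₂ - θ₃ ≠ 0 := by intro h; nlinarith
  have e12 : θ₁^2 + θ₁*θ₂ + θ₂^2 + (3 - M)*(θ₁ + θ₂) + (2 - 2*M) = 0 := by
    have h : (θ₁ - θ₂) * (θ₁^2 + θ₁*θ₂ + θ₂^2 + (3 - M)*(θ₁ + θ₂) + (2 - 2*M)) = 0 := by
      linear_combination hθ₁ - hθ₂
    exact (mul_eq_zero.mp h).resolve_left d12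
  have e13 : θ₁^2 + θ₁*θ₃ + θ₃^2 + (3 - M)*(θ₁ + θ₃) + (2 - 2*M) = 0 := by
    have h : (θ₁ - θ₃) * (θ₁^2 + θ₁*θ₃ + θ₃^2 + (3 - M)*(θ₁ + θ₃) + (2 - 2*M)) = 0 := by
      linear_combination hθ₁ - hθ₃
    exact (mul_eq_zero.mp h).resolve_left d13
  have hs : θ₁ + θ₂ + θ₃ = M - 3 := by
    have h : (θ₂ - θ₃) * (θ₁ + θ₂ + θ₃ - (M - 3)) = 0 := by linear_combination e12 - e13
    have := (mul_eq_zero.mp h).resolve_left d23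
    linarith
  have hq : θ₁*θ₂ + θ₁*θ₃ + θ₂*θ₃ = 2 - 2*M := by
    linear_combination (θ₁ + θ₂) * hs - e12
  have hr : θ₁ * θ₂ * θ₃ = 2 := by
    linear_combination hθ₁ - θ₁^2 * hs + θ₁ * hq
  refine ⟨θ₁, θ₂, θ₃, by linarith, by linarith, ?_, ?_, ?_, ?_, ?_⟩
  · intro x
    linear_combination x^2 * hs - x * hq + hr
  · linarith
  · linarith
  · -- 2/M ≤ θ₂*θ₃
    have hθ₁pos : 0 < θ₁ := by linarith
    have hp : θ₂ * θ₃ = 2 / θ₁ := by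
      rw [eq_div_iff (ne_of_gt hθ₁pos)]; linear_combination hr
    rw [hp]
    apply div_le_div_of_nonneg_left (by norm_num) hθ₁pos (le_of_lt h1r)
  · have hM1 : 0 < M - 1 := by linarith
    have hθ₁pos : 0 < θ₁ := by linarith
    have hp : θ₂ * θ₃ = 2 / θ₁ := by
      rw [eq_div_iff (ne_of_gt hθ₁pos)]; linear_combination hr
    rw [hp]
    apply div_le_div_of_nonneg_left (by norm_num) hM1 (le_of_lt h1l)
end

section
/- If Γ is a reseminant graph with more than 5 vertices, then −1 is an eigenvalue of the adjacency matrix A(Γ) with multiplicity exactly |V(Γ)| − 5 (equivalently, the rank of I + A(Γ) equals 5); if Γ is the 5-cycle C₅ itself, then −1 is not an eigenvalue of A(Γ). -/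
/-- The 5-cycle `C₅` on `Fin 5`. -/
def cycle5 : SimpleGraph (Fin 5) :=
  SimpleGraph.fromRel (fun i j => j = i + 1)

instance : DecidableRel cycle5.Adj := fun i j =>
  decidable_of_iff (i ≠ j ∧ (j = i + 1 ∨ i = j + 1)) Iff.rfl

/-- Duplicating the vertex `v'` of a simple graph `G`: a new vertex (the `Sum.inr` vertex) is
added, adjacent to `v'` and to every neighbor of `v'` in `G`. -/
def dupGraph {V : Type*} (G : SimpleGraph V) (v' : V) : SimpleGraph (V ⊕ Unit) where
  Adj x y :=
    match x, y with
    | Sum.inl a, Sum.inl b => G.Adj a b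
    | Sum.inl a, Sum.inr _ => a = v' ∨ G.Adj a v'
    | Sum.inr _, Sum.inl b => b = v' ∨ G.Adj b v'
    | Sum.inr _, Sum.inr _ => False
  symm := by
    refine ⟨?_⟩
    rintro (a | a) (b | b) h
    · exact G.symm.symm _ _ h
    · exact h
    · exact h
    · exact h.elim
  loopless := by
    refine ⟨?_⟩
    rintro (a | a) h
    · exact G.loopless.irrefl a h
    · exact h.elim

instance dupGraphAdjDecidable {V : Type*} [DecidableEq V] (G : SimpleGraph V)
    [DecidableRel G.Adj] (v' : V) : DecidableRel (dupGraph G v').Adj := fun x y =>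
  match x, y with
  | Sum.inl a, Sum.inl b => inferInstanceAs (Decidable (G.Adj a b))
  | Sum.inl a, Sum.inr _ => inferInstanceAs (Decidable (a = v' ∨ G.Adj a v'))
  | Sum.inr _, Sum.inl b => inferInstanceAs (Decidable (b = v' ∨ G.Adj b v'))
  | Sum.inr _, Sum.inr _ => inferInstanceAs (Decidable False)

/-- The vertex type of the reseminant graph built from `C₅` by the duplications recorded in
the list `l` (each entry records which of the five original cycle vertices is duplicated). -/
def resemType : List (Fin 5) → Type
  | [] => Fin 5
  | _ :: l => resemType l ⊕ Unit

instance resemTypeFintype : ∀ l : List (Fin 5), Fintype (resemType l)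
  | [] => inferInstanceAs (Fintype (Fin 5))
  | _ :: l => letI := resemTypeFintype l; inferInstanceAs (Fintype (resemType l ⊕ Unit))

instance resemTypeDecEq : ∀ l : List (Fin 5), DecidableEq (resemType l)
  | [] => inferInstanceAs (DecidableEq (Fin 5))
  | _ :: l => letI := resemTypeDecEq l; inferInstanceAs (DecidableEq (resemType l ⊕ Unit))

/-- The copy, inside `resemType l`, of an original vertex of the 5-cycle. -/
def origVert : (l : List (Fin 5)) → Fin 5 → resemType l
  | [], i => i
  | _ :: l, i => Sum.inl (origVert l i)

/-- The reseminant graph obtained from the 5-cycle `C₅` by the finite sequence of vertex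
duplications recorded in `l`: for `l = v :: l'`, the vertex (the copy of the original cycle
vertex) `v` is duplicated in the graph built from `l'`. -/
def resemGraph : (l : List (Fin 5)) → SimpleGraph (resemType l)
  | [] => cycle5
  | v :: l => dupGraph (resemGraph l) (origVert l v)

instance resemGraphAdjDecidable : ∀ l : List (Fin 5), DecidableRel (resemGraph l).Adj
  | [] => inferInstanceAs (DecidableRel cycle5.Adj)
  | v :: l =>
    letI := resemGraphAdjDecidable l
    inferInstanceAs (DecidableRel (dupGraph (resemGraph l) (origVert l v)).Adj)

/-- A simple graph is *reseminant* if it is (isomorphic to) a graph obtained from the 5-cycle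
`C₅` by a finite sequence of vertex duplications, each duplicating one of the five original
cycle vertices. -/
def IsReseminant {V : Type*} (Γ : SimpleGraph V) : Prop :=
  ∃ l : List (Fin 5), Nonempty (Γ ≃g resemGraph l)

/-- `R̃_n`: the reseminant graph on `n + 5` vertices obtained from `C₅` by `n` successive
duplications, all duplicating the same fixed vertex `0` of the original 5-cycle. -/
def tildeR (n : ℕ) : SimpleGraph (resemType (List.replicate n 0)) :=
  resemGraph (List.replicate n 0)

section AuxSpectral

open Polynomial Matrix

variable {n : Type*} [Fintype n] [DecidableEq n]

lemma my_charpoly_conj (P M : Matrix n n ℝ) (h1 : P * star P = 1) :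
    (P * M * star P).charpoly = M.charpoly := by
  have hmapmul : ∀ (A B : Matrix n n ℝ), (A * B).map (Polynomial.C : ℝ →+* ℝ[X]) =
      A.map Polynomial.C * B.map Polynomial.C := fun A B => Matrix.map_mul
  have hch : ∀ (M : Matrix n n ℝ), charmatrix M =
      Matrix.diagonal (fun _ => (X : ℝ[X])) - M.map Polynomial.C := by
    intro M
    ext i j
    by_cases h : i = j <;>
      simp [charmatrix_apply, Matrix.diagonal_apply, h, Matrix.map_apply]
  have hone : (1 : Matrix n n ℝ).map (Polynomial.C : ℝ →+* ℝ[X]) = 1 :=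
    Matrix.map_one _ (map_zero _) (map_one _)
  have key : charmatrix (P * M * star P) =
      P.map Polynomial.C * charmatrix M * (star P).map Polynomial.C := by
    rw [hch, hch]
    have hdiag : P.map (Polynomial.C : ℝ →+* ℝ[X]) * Matrix.diagonal (fun _ => (X : ℝ[X])) *
        (star P).map Polynomial.C = Matrix.diagonal (fun _ => (X : ℝ[X])) := by
      have hsm : Matrix.diagonal (fun _ : n => (X : ℝ[X])) = (X : ℝ[X]) • (1 : Matrix n n ℝ[X]) := by
        ext i j; by_cases h : i = j <;> simp [Matrix.diagonal_apply, h]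
      rw [hsm]
      simp only [Matrix.mul_smul, Matrix.smul_mul, Matrix.mul_one]
      rw [← hmapmul, h1, hone]
    rw [Matrix.mul_sub, Matrix.sub_mul, hdiag, ← hmapmul, ← hmapmul]
  have hdet : (P.map (Polynomial.C : ℝ →+* ℝ[X])).det * ((star P).map Polynomial.C).det = 1 := by
    rw [← Matrix.det_mul, ← hmapmul, h1, hone, Matrix.det_one]
  unfold Matrix.charpoly
  rw [key, Matrix.det_mul, Matrix.det_mul]
  calc (P.map Polynomial.C).det * (charmatrix M).det * ((star P).map Polynomial.C).det
      = (charmatrix M).det * ((P.map Polynomial.C).det * ((star P).map Polynomial.C).det) := by ring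
    _ = (charmatrix M).det := by rw [hdet, mul_one]

lemma my_charpoly_diagonal (d : n → ℝ) :
    (Matrix.diagonal d).charpoly = ∏ i, (X - C (d i)) := by
  have h : charmatrix (Matrix.diagonal d) = Matrix.diagonal (fun i => (X : ℝ[X]) - C (d i)) := by
    ext i j
    by_cases h : i = j <;> simp [charmatrix_apply, Matrix.diagonal_apply, h]
  rw [Matrix.charpoly, h, Matrix.det_diagonal]

lemma herm_charpoly (A : Matrix n n ℝ) (hA : A.IsHermitian) :
    A.charpoly = ∏ i, (X - C (hA.eigenvalues i)) := by
  have hspec : A = (hA.eigenvectorUnitary : Matrix n n ℝ) * Matrix.diagonal hA.eigenvalues *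
      star (hA.eigenvectorUnitary : Matrix n n ℝ) := by
    convert hA.spectral_theorem using 2
    rw [Unitary.conjStarAlgAut_apply]; rfl
  conv_lhs => rw [hspec]
  rw [my_charpoly_conj _ _ ((Matrix.mem_unitaryGroup_iff).mp hA.eigenvectorUnitary.2),
    my_charpoly_diagonal]

lemma herm_one_add (A : Matrix n n ℝ) (hA : A.IsHermitian) :
    1 + A = (hA.eigenvectorUnitary : Matrix n n ℝ) *
      Matrix.diagonal (fun i => 1 + hA.eigenvalues i) *
      star (hA.eigenvectorUnitary : Matrix n n ℝ) := by
  have hspec : A = (hA.eigenvectorUnitary : Matrix n n ℝ) * Matrix.diagonal hA.eigenvalues *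
      star (hA.eigenvectorUnitary : Matrix n n ℝ) := by
    convert hA.spectral_theorem using 2
    rw [Unitary.conjStarAlgAut_apply]; rfl
  have h1 : (hA.eigenvectorUnitary : Matrix n n ℝ) *
      star (hA.eigenvectorUnitary : Matrix n n ℝ) = 1 :=
    (Matrix.mem_unitaryGroup_iff).mp hA.eigenvectorUnitary.2
  have hd : Matrix.diagonal (fun i => 1 + hA.eigenvalues i) =
      1 + Matrix.diagonal hA.eigenvalues := by
    rw [← Matrix.diagonal_one, Matrix.diagonal_add]
  rw [hd, Matrix.mul_add, Matrix.add_mul, Matrix.mul_one, h1]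
  conv_lhs => rw [hspec]

lemma rank_one_add (A : Matrix n n ℝ) (hA : A.IsHermitian) :
    (1 + A).rank = Fintype.card {i // 1 + hA.eigenvalues i ≠ 0} := by
  have h1 : (hA.eigenvectorUnitary : Matrix n n ℝ) *
      star (hA.eigenvectorUnitary : Matrix n n ℝ) = 1 :=
    (Matrix.mem_unitaryGroup_iff).mp hA.eigenvectorUnitary.2
  have h2 : star (hA.eigenvectorUnitary : Matrix n n ℝ) *
      (hA.eigenvectorUnitary : Matrix n n ℝ) = 1 :=
    (Matrix.mem_unitaryGroup_iff').mp hA.eigenvectorUnitary.2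
  have hdet1 : IsUnit ((hA.eigenvectorUnitary : Matrix n n ℝ)).det :=
    IsUnit.of_mul_eq_one _ (by rw [← Matrix.det_mul, h1, Matrix.det_one])
  have hdet2 : IsUnit (star (hA.eigenvectorUnitary : Matrix n n ℝ)).det :=
    IsUnit.of_mul_eq_one _ (by rw [← Matrix.det_mul, h2, Matrix.det_one])
  rw [herm_one_add A hA, Matrix.rank_mul_eq_left_of_isUnit_det _ _ hdet2,
    Matrix.rank_mul_eq_right_of_isUnit_det _ _ hdet1, Matrix.rank_diagonal]

lemma rootMult_count (μ : n → ℝ) (a : ℝ) :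
    (∏ i, (X - C (μ i))).rootMultiplicity a = Fintype.card {i // μ i = a} := by
  classical
  rw [← Polynomial.count_roots]
  have h : (∏ i, (X - C (μ i))) = ((Finset.univ.val.map μ).map (fun b => X - C b)).prod := by
    rw [Multiset.map_map]
    rfl
  rw [h, Polynomial.roots_multiset_prod_X_sub_C, Multiset.count_map,
    Fintype.card_subtype, Finset.card, Finset.filter_val]
  congr 1
  apply Multiset.filter_congr
  intro x _
  exact eq_comm

lemma herm_M1 (A : Matrix n n ℝ) (hA : A.IsHermitian) :
    A.charpoly.rootMultiplicity (-1) + (1 + A).rank = Fintype.card n := by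
  rw [herm_charpoly A hA, rootMult_count, rank_one_add A hA]
  have hiff : ∀ i, (1 + hA.eigenvalues i ≠ 0) ↔ ¬ (hA.eigenvalues i = -1) := by
    intro i
    constructor <;> intro h h2 <;> apply h <;> linarith
  have hcongr : Fintype.card {i // 1 + hA.eigenvalues i ≠ 0} =
      Fintype.card {i // ¬ (hA.eigenvalues i = -1)} :=
    Fintype.card_congr (Equiv.subtypeEquivRight hiff)
  rw [hcongr, Fintype.card_subtype_compl]
  have hle := Fintype.card_subtype_le (fun i => hA.eigenvalues i = -1)
  omega

end AuxSpectral

section AuxGraph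

open Polynomial Matrix

lemma dup_rank {V : Type*} [Fintype V] [DecidableEq V] (G : SimpleGraph V) [DecidableRel G.Adj]
    (w : V) : (1 + (dupGraph G w).adjMatrix ℝ).rank = (1 + G.adjMatrix ℝ).rank := by
  set B : Matrix V V ℝ := 1 + G.adjMatrix ℝ with hB
  set M : Matrix (V ⊕ Unit) (V ⊕ Unit) ℝ := 1 + (dupGraph G w).adjMatrix ℝ with hM
  set C : Matrix V (V ⊕ Unit) ℝ :=
    Matrix.of fun x y => Sum.elim (fun b => if x = b then (1:ℝ) else 0)
      (fun _ => if x = w then 1 else 0) y with hC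
  set D : Matrix (V ⊕ Unit) V ℝ :=
    Matrix.of fun x y => Sum.elim (fun a => if a = y then (1:ℝ) else 0) (fun _ => (0:ℝ)) x with hD
  have hBC : ∀ (x : V) (j : V ⊕ Unit),
      (B * C) x j = Sum.elim (fun b => B x b) (fun _ => B x w) j := by
    intro x j
    cases j with
    | inl b => simp [Matrix.mul_apply, hC, mul_ite]
    | inr u => simp [Matrix.mul_apply, hC, mul_ite]
  have claim1 : M = Cᵀ * (B * C) := by
    ext i j
    have hCt : ∀ (x : V) (i : V ⊕ Unit), Cᵀ i x = Sum.elim (fun a => if x = a then (1:ℝ) else 0)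
      (fun _ => if x = w then 1 else 0) i := fun x i => rfl
    rw [Matrix.mul_apply]
    cases i with
    | inl a =>
      simp only [hCt]
      rw [Finset.sum_congr rfl (fun x _ => by rw [hBC])]
      cases j with
      | inl b =>
        simp only [Sum.elim_inl]
        rw [Finset.sum_eq_single a (by intro x _ hx; simp [hx]) (by simp)]
        simp [hM, hB, SimpleGraph.adjMatrix, dupGraph, Matrix.one_apply]; congr
      | inr u =>
        simp only [Sum.elim_inr, Sum.elim_inl]
        rw [Finset.sum_eq_single a (by intro x _ hx; simp [hx]) (by simp)]
        simp only [if_pos rfl, one_mul]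
        by_cases haw : a = w
        · subst haw
          simp [hM, hB, SimpleGraph.adjMatrix, dupGraph, Matrix.one_apply]
        · simp [hM, hB, SimpleGraph.adjMatrix, dupGraph, Matrix.one_apply, haw]
    | inr u =>
      simp only [hCt]
      rw [Finset.sum_congr rfl (fun x _ => by rw [hBC])]
      rw [Finset.sum_eq_single w (by intro x _ hx; simp [hx]) (by simp)]
      simp only [if_pos rfl, one_mul]
      cases j with
      | inl b =>
        simp only [Sum.elim_inl]
        by_cases hbw : b = w
        · subst hbw
          simp [hM, hB, SimpleGraph.adjMatrix, dupGraph, Matrix.one_apply]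
        · simp [hM, hB, SimpleGraph.adjMatrix, dupGraph, Matrix.one_apply, hbw,
            Ne.symm hbw, G.adj_comm, eq_comm]
      | inr v =>
        simp [hM, hB, SimpleGraph.adjMatrix, dupGraph, Matrix.one_apply]
  have hMD : ∀ (x : V ⊕ Unit) (b : V), (M * D) x b = M x (Sum.inl b) := by
    intro x b
    rw [Matrix.mul_apply, Fintype.sum_sum_type]
    simp [hD, mul_ite]
  have claim2 : B = Dᵀ * (M * D) := by
    ext a b
    rw [Matrix.mul_apply, Fintype.sum_sum_type]
    simp only [Matrix.transpose_apply, hD, Matrix.of_apply, Sum.elim_inl, Sum.elim_inr,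
      zero_mul, Finset.sum_const_zero, add_zero]
    rw [Finset.sum_congr rfl (fun x _ => by rw [hMD])]
    rw [Finset.sum_eq_single a (by intro x _ hx; simp [hx]) (by simp)]
    simp [hM, hB, SimpleGraph.adjMatrix, dupGraph, Matrix.one_apply]; congr
  apply le_antisymm
  · calc M.rank = (Cᵀ * (B * C)).rank := by rw [claim1]
      _ ≤ (B * C).rank := Matrix.rank_mul_le_right _ _
      _ ≤ B.rank := Matrix.rank_mul_le_left _ _
  · calc B.rank = (Dᵀ * (M * D)).rank := by rw [claim2]
      _ ≤ (M * D).rank := Matrix.rank_mul_le_right _ _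
      _ ≤ M.rank := Matrix.rank_mul_le_left _ _

lemma cycle5_det : (1 + cycle5.adjMatrix ℝ).det = 3 := by
  have hentry : ∀ i j : Fin 5, (1 + cycle5.adjMatrix ℝ) i j =
      if i = j then 1 else if cycle5.Adj i j then 1 else 0 := by
    intro i j
    by_cases h : i = j
    · subst h; simp [Matrix.one_apply, SimpleGraph.adjMatrix_apply]
    · simp [Matrix.one_apply, h, SimpleGraph.adjMatrix_apply]
  simp only [Matrix.det_succ_row_zero, Fin.sum_univ_succ, Finset.univ_unique, Fin.default_eq_zero,
    Finset.sum_singleton, Matrix.det_unique, Matrix.submatrix_apply, Matrix.submatrix_submatrix,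
    Function.comp_apply, hentry]
  simp (config := { decide := true }) only []
  norm_num

lemma card_resemType : ∀ l : List (Fin 5), Fintype.card (resemType l) = l.length + 5
  | [] => rfl
  | v :: l => by
    show Fintype.card (resemType l ⊕ Unit) = (v :: l).length + 5
    rw [Fintype.card_sum, card_resemType l]
    simp [List.length_cons]

lemma rank_resem : ∀ l : List (Fin 5), (1 + (resemGraph l).adjMatrix ℝ).rank = 5
  | [] => by
    have hdet : IsUnit (1 + cycle5.adjMatrix ℝ).det := by
      rw [cycle5_det]; norm_num
    have := Matrix.rank_of_isUnit _ ((Matrix.isUnit_iff_isUnit_det _).mpr hdet)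
    show (1 + cycle5.adjMatrix ℝ).rank = 5
    simpa using this
  | v :: l => by
    have h1 : (1 + (resemGraph (v :: l)).adjMatrix ℝ).rank =
        (1 + (dupGraph (resemGraph l) (origVert l v)).adjMatrix ℝ).rank := rfl
    rw [h1, dup_rank, rank_resem l]

end AuxGraph

/-- If `Γ` is a reseminant graph with more than 5 vertices, then `−1` is an
eigenvalue of the adjacency matrix `A(Γ)` with multiplicity exactly `|V(Γ)| − 5` (as a root of
the characteristic polynomial), equivalently the rank of `I + A(Γ)` equals `5`; if `Γ` is the
5-cycle `C₅` itself, then `−1` is not an eigenvalue of `A(Γ)`. -/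
theorem neg_one_eigenvalue_reseminant {V : Type*} [Fintype V] [DecidableEq V]
    (Γ : SimpleGraph V) [DecidableRel Γ.Adj] (h : IsReseminant Γ) :
    (5 < Fintype.card V →
      (Γ.adjMatrix ℝ).charpoly.rootMultiplicity (-1) = Fintype.card V - 5 ∧
      (1 + Γ.adjMatrix ℝ).rank = 5) ∧
    (Nonempty (Γ ≃g cycle5) → ¬ (Γ.adjMatrix ℝ).charpoly.IsRoot (-1)) := by
  classical
  obtain ⟨l, ⟨e⟩⟩ := h
  have hAdj : Γ.adjMatrix ℝ = ((resemGraph l).adjMatrix ℝ).submatrix e.toEquiv e.toEquiv := by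
    ext u v
    simp only [Matrix.submatrix_apply, SimpleGraph.adjMatrix_apply]
    congr 1
    simp only [eq_iff_iff]
    exact (e.map_adj_iff).symm
  have hone : (1 : Matrix V V ℝ) + ((resemGraph l).adjMatrix ℝ).submatrix e.toEquiv e.toEquiv =
      (1 + (resemGraph l).adjMatrix ℝ).submatrix e.toEquiv e.toEquiv := by
    ext i j
    simp [Matrix.one_apply, Matrix.submatrix_apply, Equiv.apply_eq_iff_eq]
  have hrank5 : (1 + Γ.adjMatrix ℝ).rank = 5 := by
    rw [hAdj, hone, Matrix.rank_submatrix, rank_resem]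
  have hherm : (Γ.adjMatrix ℝ).IsHermitian := by
    ext i j
    simp only [Matrix.conjTranspose_apply, SimpleGraph.adjMatrix_apply, star_trivial]
    congr 1
    simp only [eq_iff_iff]
    exact Γ.adj_comm j i
  have hM1 := herm_M1 (Γ.adjMatrix ℝ) hherm
  rw [hrank5] at hM1
  constructor
  · intro _
    exact ⟨by omega, hrank5⟩
  · rintro ⟨e'⟩
    intro hroot
    have hcard : Fintype.card V = 5 := by
      rw [Fintype.card_congr e'.toEquiv, Fintype.card_fin]
    have hne : (Γ.adjMatrix ℝ).charpoly ≠ 0 := (Matrix.charpoly_monic _).ne_zero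
    have hpos := (Polynomial.rootMultiplicity_pos hne).mpr hroot
    omega
end

section
/- For every integer n ≥ 0, the cubic polynomial x³ − (n+1)x² − (n+3)x + (3n+2) has three real roots θ₁ ≥ θ₂ ≥ θ₃, and its second and third largest roots satisfy −1 ≤ θ₂ + θ₃ ≤ −(n+1)/(n+3) and −(2+3n)(n+3)/((n+1)(n+4)) ≤ θ₂·θ₃ ≤ −(2+3n)/(n+2). -/
set_option maxHeartbeats 1000000 in
/-- For every integer `n ≥ 0`, the cubic polynomial
`x³ − (n+1)x² − (n+3)x + (3n+2)` has three real roots `θ₁ ≥ θ₂ ≥ θ₃`, and its second and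
third largest roots satisfy `−1 ≤ θ₂ + θ₃ ≤ −(n+1)/(n+3)` and
`−(2+3n)(n+3)/((n+1)(n+4)) ≤ θ₂·θ₃ ≤ −(2+3n)/(n+2)`. -/
theorem cubic_roots_tildeR_bounds (n : ℕ) :
    ∃ θ₁ θ₂ θ₃ : ℝ, θ₂ ≤ θ₁ ∧ θ₃ ≤ θ₂ ∧
      (∀ x : ℝ, x ^ 3 - ((n : ℝ) + 1) * x ^ 2 - ((n : ℝ) + 3) * x + (3 * (n : ℝ) + 2) =
        (x - θ₁) * (x - θ₂) * (x - θ₃)) ∧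
      -1 ≤ θ₂ + θ₃ ∧ θ₂ + θ₃ ≤ -(((n : ℝ) + 1) / ((n : ℝ) + 3)) ∧
      -((2 + 3 * (n : ℝ)) * ((n : ℝ) + 3) / (((n : ℝ) + 1) * ((n : ℝ) + 4))) ≤ θ₂ * θ₃ ∧
      θ₂ * θ₃ ≤ -((2 + 3 * (n : ℝ)) / ((n : ℝ) + 2)) := by
  have hn : (0:ℝ) ≤ (n:ℝ) := Nat.cast_nonneg n
  set N : ℝ := (n:ℝ) with hN
  set f : ℝ → ℝ := fun x => x ^ 3 - (N + 1) * x ^ 2 - (N + 3) * x + (3 * N + 2) with hf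
  set a : ℝ := (N + 1) * (N + 4) / (N + 3) with ha
  have h3 : (0:ℝ) < N + 3 := by positivity
  have hab : a ≤ N + 2 := by
    rw [ha, div_le_iff₀ h3]; nlinarith
  have hfa : f a ≤ 0 := by
    have key : f a * (N + 3) ^ 3 = -(4 * N ^ 3 + 26 * N ^ 2 + 52 * N + 38) := by
      rw [hf, ha]; field_simp; ring
    nlinarith [pow_pos h3 3]
  have hfb : 0 ≤ f (N + 2) := by
    have : f (N + 2) = 2 * N := by rw [hf]; ring
    nlinarith
  have hcont : ContinuousOn f (Set.Icc a (N + 2)) := by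
    apply Continuous.continuousOn; rw [hf]; continuity
  obtain ⟨t, htmem, htf⟩ := intermediate_value_Icc hab hcont ⟨hfa, hfb⟩
  obtain ⟨hta, htb⟩ := htmem
  have hroot : t ^ 3 - (N + 1) * t ^ 2 - (N + 3) * t + (3 * N + 2) = 0 := htf
  have hta1 : N + 1 ≤ t := by
    have : N + 1 ≤ a := by rw [ha, le_div_iff₀ h3]; nlinarith
    linarith
  have hta2 : (N + 1) * (N + 4) ≤ t * (N + 3) := by
    rw [ha, div_le_iff₀ h3] at hta; linarith
  have htpos : 0 < t := by linarith
  -- derivative nonneg at the root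
  have hp' : 0 ≤ 3 * t ^ 2 - 2 * (N + 1) * t - (N + 3) := by
    rcases Nat.eq_zero_or_pos n with h0 | h1
    · have hN0 : N = 0 := by rw [hN, h0]; norm_num
      rw [hN0] at hroot hta2
      have hfac : (t - 2) * (t ^ 2 + t - 1) = 0 := by linear_combination hroot
      have hq : t ^ 2 + t - 1 > 0 := by nlinarith
      have ht2 : t = 2 := by
        rcases mul_eq_zero.mp hfac with h | h
        · linarith
        · linarith
      rw [hN0, ht2]; norm_num
    · have h1' : (1:ℝ) ≤ N := by rw [hN]; exact_mod_cast h1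
      nlinarith [sq_nonneg (t - (N + 1))]
  set D : ℝ := -3 * t ^ 2 + 2 * (N + 1) * t + (N + 1) ^ 2 + 4 * (N + 3) with hD
  have hDpos : 0 ≤ D := by
    rw [hD]; nlinarith [mul_nonneg (by linarith : (0:ℝ) ≤ N + 2 - t) (by linarith : (0:ℝ) ≤ t - (N + 1))]
  set s : ℝ := Real.sqrt D with hs
  have hs0 : 0 ≤ s := Real.sqrt_nonneg D
  have hs2 : s ^ 2 = D := Real.sq_sqrt hDpos
  have hsle : s ≤ 3 * t - (N + 1) := by
    have h1 : D ≤ (3 * t - (N + 1)) ^ 2 := by nlinarith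
    have h2 : (0:ℝ) ≤ 3 * t - (N + 1) := by linarith
    calc s = Real.sqrt D := hs
      _ ≤ Real.sqrt ((3 * t - (N + 1)) ^ 2) := Real.sqrt_le_sqrt h1
      _ = |3 * t - (N + 1)| := by rw [Real.sqrt_sq_eq_abs]
      _ = 3 * t - (N + 1) := abs_of_nonneg h2
  have hc : (N + 1 - t + s) / 2 * ((N + 1 - t - s) / 2) = t ^ 2 - (N + 1) * t - (N + 3) := by
    linear_combination (-(1:ℝ)/4) * hs2
  have htc : t * (t ^ 2 - (N + 1) * t - (N + 3)) = -(3 * N + 2) := by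
    linear_combination hroot
  have hcneg : t ^ 2 - (N + 1) * t - (N + 3) < 0 := by
    by_contra h
    push_neg at h
    have h2 : (0:ℝ) ≤ t * (t ^ 2 - (N + 1) * t - (N + 3)) := mul_nonneg htpos.le h
    rw [htc] at h2
    linarith
  clear hcont htf hfa hfb
  clear_value s D a f N
  refine ⟨t, (N + 1 - t + s) / 2, (N + 1 - t - s) / 2, by linarith, by linarith, ?_, by linarith, ?_, ?_, ?_⟩
  · intro x
    linear_combination hroot + ((x - t) / 4) * hs2 + ((x - t) / 4) * hD
  · have h23 : (N + 1 - t + s) / 2 + (N + 1 - t - s) / 2 = N + 1 - t := by ring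
    rw [h23, show -((N + 1) / (N + 3)) = (-(N + 1)) / (N + 3) from by rw [neg_div],
      le_div_iff₀ h3]
    nlinarith [hta2]
  · rw [hc]
    have hB : (0:ℝ) < (N + 1) * (N + 4) := by positivity
    rw [show -((2 + 3 * N) * (N + 3) / ((N + 1) * (N + 4))) =
        (-((2 + 3 * N) * (N + 3))) / ((N + 1) * (N + 4)) from by rw [neg_div], div_le_iff₀ hB]
    nlinarith [mul_nonneg (by linarith : (0:ℝ) ≤ -(t ^ 2 - (N + 1) * t - (N + 3)))
      (by linarith : (0:ℝ) ≤ t * (N + 3) - (N + 1) * (N + 4))]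
  · rw [hc]
    have h2p : (0:ℝ) < N + 2 := by positivity
    rw [show -((2 + 3 * N) / (N + 2)) = (-(2 + 3 * N)) / (N + 2) from by rw [neg_div],
      le_div_iff₀ h2p]
    nlinarith [mul_nonneg (by linarith : (0:ℝ) ≤ -(t ^ 2 - (N + 1) * t - (N + 3)))
      (by linarith : (0:ℝ) ≤ N + 2 - t)]
end
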